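/- arXiv:1001.2163 — 4 statements merged into one kernel-verified Lean document; each statement's English description precedes it below -/
import Mathlib

section
/- Let B be a distribution function of a nonnegative random variable with B(0) < 1, let T > 0, and let f and fⁿ (n ≥ 1) be Borel functions from ℝ × [0,∞) to ℝ, each satisfying |g(y,t)| ≤ |y| and |g(y₁,t) − g(y₂,t)| ≤ |y₁ − y₂|. Suppose fⁿ(y,t) → f(y,t) as n → ∞ for every y and t, f^m(y,t) ≤ fⁿ(y,t) whenever m ≥ n, and fⁿ(y₁,t) ≤ fⁿ(y₂,t) whenever y₁ ≤ y₂. Let x and xⁿ be bounded Borel functions on [0,T] with xⁿ(t) → x(t) for every t ∈ [0,T] and sup_n sup_{t∈[0,T]} |xⁿ(t)| < ∞, and let y and yⁿ be the unique bounded Borel solutions of y(t) = x(t) + ∫₀ᵗ f(y(t−s), t−s) dB(s) and yⁿ(t) = xⁿ(t) + ∫₀ᵗ fⁿ(yⁿ(t−s), t−s) dB(s). Then yⁿ(t) → y(t) as n → ∞ for every t ∈ [0,T]. -/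
open MeasureTheory Filter Set Topology
open scoped ENNReal
set_option maxHeartbeats 1000000

noncomputable def gronK (a q c : ℝ) : ℕ → ℝ
  | 0 => a / (1 - q)
  | (k+1) => (a + c * gronK a q c k) / (1 - q)

lemma gronK_nonneg {a q c : ℝ} (ha : 0 ≤ a) (hc : 0 ≤ c) (hq : q < 1) (k : ℕ) :
    0 ≤ gronK a q c k := by
  induction k with
  | zero => exact div_nonneg ha (by linarith)
  | succ k ih =>
      rw [gronK]
      exact div_nonneg (by nlinarith) (by linarith)

lemma gronK_zero {q c : ℝ} (k : ℕ) : gronK 0 q c k = 0 := by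
  induction k with
  | zero => simp [gronK]
  | succ k ih => simp [gronK, ih]

lemma gronwall_window (μ : Measure ℝ) (T ε q c a M : ℝ) (hT : 0 ≤ T) (hε : 0 < ε)
    (hq0 : 0 ≤ q) (hq1 : q < 1) (hc : 0 ≤ c) (ha : 0 ≤ a)
    (hμε : μ (Icc 0 ε) ≤ ENNReal.ofReal q)
    (hμT : μ (Icc 0 T) ≤ ENNReal.ofReal c)
    (u : ℝ → ℝ) (hum : Measurable u) (hu0 : ∀ t, 0 ≤ u t) (huM : ∀ t, u t ≤ M)
    (H : ∀ t ∈ Icc 0 T, u t ≤ a + ∫ s in Icc 0 t, u (t - s) ∂μ)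
    (k : ℕ) (hk : T ≤ k * ε) :
    ∀ t ∈ Icc 0 T, u t ≤ gronK a q c k := by
  have h1q : (0:ℝ) < 1 - q := by linarith
  have hInt : ∀ (s : Set ℝ), s ⊆ Icc 0 T → ∀ t : ℝ,
      IntegrableOn (fun r => u (t - r)) s μ := by
    intro s hs t
    refine Measure.integrableOn_of_bounded (M := M) ?_ ?_ ?_
    · exact ne_of_lt (lt_of_le_of_lt (measure_mono hs) (lt_of_le_of_lt hμT ENNReal.ofReal_lt_top))
    · exact (hum.comp (measurable_const.sub measurable_id)).aestronglyMeasurable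
    · filter_upwards with r
      rw [Real.norm_eq_abs, abs_of_nonneg (hu0 _)]
      exact huM _
  have key : ∀ k : ℕ, ∀ t ∈ Icc 0 T, t ≤ k * ε → u t ≤ gronK a q c k := by
    intro k
    induction k with
    | zero =>
        intro t ht ht0
        have htz : t = 0 := le_antisymm (by simpa using ht0) ht.1
        subst htz
        have h1 := H 0 ⟨le_refl 0, hT⟩
        have hfin : μ (Icc (0:ℝ) 0) < ∞ :=
          lt_of_le_of_lt (measure_mono (Icc_subset_Icc le_rfl hε.le))
            (lt_of_le_of_lt hμε ENNReal.ofReal_lt_top)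
        have h2 : ‖∫ s in Icc (0:ℝ) 0, u (0 - s) ∂μ‖ ≤ u 0 * (μ (Icc (0:ℝ) 0)).toReal := by
          refine norm_setIntegral_le_of_norm_le_const hfin ?_
          intro s hs
          have : s = 0 := le_antisymm hs.2 hs.1
          subst this
          rw [Real.norm_eq_abs, abs_of_nonneg (hu0 _)]
          norm_num
        have h3 : (μ (Icc (0:ℝ) 0)).toReal ≤ q :=
          ENNReal.toReal_le_of_le_ofReal hq0
            (le_trans (measure_mono (Icc_subset_Icc le_rfl hε.le)) hμε)
        have h4 : ∫ s in Icc (0:ℝ) 0, u (0 - s) ∂μ ≤ u 0 * q :=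
          le_trans (le_trans (le_abs_self _) h2)
            (mul_le_mul_of_nonneg_left h3 (hu0 0))
        rw [gronK, le_div_iff₀ h1q]
        nlinarith [hu0 0]
    | succ k ih =>
        intro t ht htk
        set W := {r : ℝ | r ∈ Icc 0 T ∧ r ≤ (k+1) * ε} with hW
        have hW0 : (0:ℝ) ∈ W := ⟨⟨le_rfl, hT⟩, by positivity⟩
        have hbdd : BddAbove (u '' W) := ⟨M, by rintro _ ⟨r, _, rfl⟩; exact huM r⟩
        set S := sSup (u '' W) with hS
        have hle : ∀ r ∈ W, u r ≤ S := fun r hr => le_csSup hbdd (mem_image_of_mem u hr)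
        have hS0 : 0 ≤ S := le_trans (hu0 0) (hle 0 hW0)
        have hKk : 0 ≤ gronK a q c k := gronK_nonneg ha hc hq1 k
        have main : ∀ r ∈ W, u r ≤ a + q * S + c * gronK a q c k := by
          rintro r ⟨⟨hr0, hrT⟩, hrk⟩
          set m := min r ε with hm
          have hm0 : 0 ≤ m := le_min hr0 hε.le
          have hmr : m ≤ r := min_le_left _ _
          have hmε : m ≤ ε := min_le_right _ _
          have hsplit : Icc 0 r = Icc 0 m ∪ Ioc m r := (Icc_union_Ioc_eq_Icc hm0 hmr).symm
          have hdisj : Disjoint (Icc (0:ℝ) m) (Ioc m r) := by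
            rw [Set.disjoint_left]
            rintro z ⟨_, hz2⟩ ⟨hz3, _⟩
            exact absurd hz2 (not_le.mpr hz3)
          have hsub1 : Icc (0:ℝ) m ⊆ Icc 0 T := Icc_subset_Icc le_rfl (hmr.trans hrT)
          have hsub2 : Ioc m r ⊆ Icc (0:ℝ) T := fun z hz =>
            ⟨hm0.trans hz.1.le, hz.2.trans hrT⟩
          have h12 : ∫ s in Icc 0 r, u (r - s) ∂μ =
              (∫ s in Icc 0 m, u (r - s) ∂μ) + ∫ s in Ioc m r, u (r - s) ∂μ := by
            rw [hsplit]
            exact setIntegral_union hdisj measurableSet_Ioc (hInt _ hsub1 r) (hInt _ hsub2 r)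
          have hI1 : ∫ s in Icc 0 m, u (r - s) ∂μ ≤ S * q := by
            have hfin : μ (Icc (0:ℝ) m) < ∞ :=
              lt_of_le_of_lt (measure_mono (Icc_subset_Icc le_rfl hmε))
                (lt_of_le_of_lt hμε ENNReal.ofReal_lt_top)
            have hb : ‖∫ s in Icc (0:ℝ) m, u (r - s) ∂μ‖ ≤ S * (μ (Icc (0:ℝ) m)).toReal := by
              refine norm_setIntegral_le_of_norm_le_const hfin ?_
              intro s hs
              rw [Real.norm_eq_abs, abs_of_nonneg (hu0 _)]
              refine hle _ ⟨⟨by linarith [hs.2, hmr], by linarith [hs.1]⟩, by linarith [hs.1]⟩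
            have h3 : (μ (Icc (0:ℝ) m)).toReal ≤ q :=
              ENNReal.toReal_le_of_le_ofReal hq0
                (le_trans (measure_mono (Icc_subset_Icc le_rfl hmε)) hμε)
            calc ∫ s in Icc (0:ℝ) m, u (r - s) ∂μ ≤ ‖∫ s in Icc (0:ℝ) m, u (r - s) ∂μ‖ :=
                  le_abs_self _
              _ ≤ S * (μ (Icc (0:ℝ) m)).toReal := hb
              _ ≤ S * q := mul_le_mul_of_nonneg_left h3 hS0
          have hI2 : ∫ s in Ioc m r, u (r - s) ∂μ ≤ gronK a q c k * c := by
            have hfin : μ (Ioc m r) < ∞ :=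
              lt_of_le_of_lt (measure_mono hsub2)
                (lt_of_le_of_lt hμT ENNReal.ofReal_lt_top)
            have hb : ‖∫ s in Ioc m r, u (r - s) ∂μ‖ ≤
                gronK a q c k * (μ (Ioc m r)).toReal := by
              refine norm_setIntegral_le_of_norm_le_const hfin ?_
              intro s hs
              rw [Real.norm_eq_abs, abs_of_nonneg (hu0 _)]
              have hεs : ε < s := by
                rcases min_lt_iff.mp hs.1 with h | h
                · exact absurd hs.2 (not_le.mpr h)
                · exact h
              refine ih (r - s) ⟨by linarith [hs.2], by linarith⟩ (by push_cast; linarith)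
            have h3 : (μ (Ioc m r)).toReal ≤ c :=
              ENNReal.toReal_le_of_le_ofReal hc (le_trans (measure_mono hsub2) hμT)
            calc ∫ s in Ioc m r, u (r - s) ∂μ ≤ ‖∫ s in Ioc m r, u (r - s) ∂μ‖ := le_abs_self _
              _ ≤ gronK a q c k * (μ (Ioc m r)).toReal := hb
              _ ≤ gronK a q c k * c := mul_le_mul_of_nonneg_left h3 hKk
          have := H r ⟨hr0, hrT⟩
          rw [h12] at this
          linarith
        have hSle : S ≤ a + q * S + c * gronK a q c k := by
          refine csSup_le ⟨u 0, mem_image_of_mem u hW0⟩ ?_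
          rintro _ ⟨r, hr, rfl⟩
          exact main r hr
        have hSK : S ≤ gronK a q c (k+1) := by
          rw [gronK, le_div_iff₀ h1q]
          nlinarith
        exact le_trans (hle t ⟨ht, by push_cast at htk ⊢; linarith⟩) hSK
  intro t ht
  exact key k t ht (ht.2.trans hk)

lemma tendsto_tail_sup {a : ℕ → ℝ} (M : ℝ) (h0 : ∀ n, 0 ≤ a n) (hM : ∀ n, a n ≤ M)
    (ha : Tendsto a atTop (𝓝 0)) :
    Tendsto (fun N => ⨆ m : ℕ, a (N + m)) atTop (𝓝 0) := by
  have hbdd : ∀ N : ℕ, BddAbove (Set.range fun m : ℕ => a (N + m)) := fun N =>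
    ⟨M, by rintro _ ⟨m, rfl⟩; exact hM _⟩
  rw [Metric.tendsto_atTop] at ha ⊢
  intro ε hε
  obtain ⟨N, hN⟩ := ha (ε / 2) (by linarith)
  refine ⟨N, fun n hn => ?_⟩
  have h1 : (⨆ m : ℕ, a (n + m)) ≤ ε / 2 := by
    refine ciSup_le fun m => ?_
    have := hN (n + m) (le_trans hn (Nat.le_add_right _ _))
    rw [Real.dist_eq, sub_zero, abs_of_nonneg (h0 _)] at this
    linarith
  have h2 : 0 ≤ ⨆ m : ℕ, a (n + m) :=
    le_trans (h0 n) (by simpa using le_ciSup (hbdd n) 0)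
  rw [Real.dist_eq, sub_zero, abs_of_nonneg h2]
  linarith


/-- `B` is the distribution function of a nonnegative random variable:
it vanishes on the negatives and tends to `1` at infinity. -/
def IsNNDistFun (B : StieltjesFunction ℝ) : Prop :=
  (∀ x < (0 : ℝ), B x = 0) ∧ Tendsto B atTop (nhds 1)

/-- `y` is a bounded Borel solution on `[0,T]` of the convolution equation
`y(t) = x(t) + ∫₀ᵗ f(y(t-s), t-s) dB(s)`. -/
def SolvesConv (B : StieltjesFunction ℝ) (T : ℝ) (x : ℝ → ℝ) (f : ℝ → ℝ → ℝ)
    (y : ℝ → ℝ) : Prop :=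
  Measurable (fun t : Set.Icc (0 : ℝ) T => y t) ∧
  (∃ C : ℝ, ∀ t ∈ Set.Icc (0 : ℝ) T, |y t| ≤ C) ∧
  ∀ t ∈ Set.Icc (0 : ℝ) T,
    y t = x t + ∫ s in Set.Icc (0 : ℝ) t, f (y (t - s)) (t - s) ∂B.measure

/-- `g` is a Borel function on `ℝ × [0,∞)` satisfying `|g(y,t)| ≤ |y|` and the Lipschitz
condition `|g(y₁,t) − g(y₂,t)| ≤ |y₁ − y₂|`. -/
def GoodKernel (g : ℝ → ℝ → ℝ) : Prop :=
  Measurable (Function.uncurry g) ∧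
  (∀ (y t : ℝ), 0 ≤ t → |g y t| ≤ |y|) ∧
  (∀ (y₁ y₂ t : ℝ), 0 ≤ t → |g y₁ t - g y₂ t| ≤ |y₁ - y₂|)

/-- Pointwise convergence of solutions of convolution equations under monotone
convergence of the kernels (Lemma B.2, part 2). -/
theorem convolutionEquation_solutions_converge_pointwise
    (B : StieltjesFunction ℝ) (hB : IsNNDistFun B) (hB0 : B 0 < 1)
    (T : ℝ) (hT : 0 < T)
    (f : ℝ → ℝ → ℝ) (hf : GoodKernel f)
    (fn : ℕ → ℝ → ℝ → ℝ) (hfn : ∀ n, GoodKernel (fn n))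
    (hfpt : ∀ (y t : ℝ), 0 ≤ t → Tendsto (fun n => fn n y t) atTop (nhds (f y t)))
    (hfdec : ∀ (m n : ℕ), n ≤ m → ∀ (y t : ℝ), 0 ≤ t → fn m y t ≤ fn n y t)
    (hfmono : ∀ (n : ℕ) (y₁ y₂ t : ℝ), 0 ≤ t → y₁ ≤ y₂ → fn n y₁ t ≤ fn n y₂ t)
    (x : ℝ → ℝ) (xn : ℕ → ℝ → ℝ)
    (hxm : Measurable (fun t : Set.Icc (0 : ℝ) T => x t))
    (hxb : ∃ C : ℝ, ∀ t ∈ Set.Icc (0 : ℝ) T, |x t| ≤ C)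
    (hxnm : ∀ n, Measurable (fun t : Set.Icc (0 : ℝ) T => xn n t))
    (hxnpt : ∀ t ∈ Set.Icc (0 : ℝ) T, Tendsto (fun n => xn n t) atTop (nhds (x t)))
    (hxnb : ∃ C : ℝ, ∀ (n : ℕ), ∀ t ∈ Set.Icc (0 : ℝ) T, |xn n t| ≤ C)
    (y : ℝ → ℝ) (hy : SolvesConv B T x f y)
    (yn : ℕ → ℝ → ℝ) (hyn : ∀ n, SolvesConv B T (xn n) (fn n) (yn n)) :
    ∀ t ∈ Set.Icc (0 : ℝ) T, Tendsto (fun n => yn n t) atTop (nhds (y t)) := by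
  classical
  obtain ⟨hBneg, hBtop⟩ := hB
  set μ := B.measure with hμdef
  have hT' : (0:ℝ) ≤ T := hT.le
  -- constants
  obtain ⟨Cy, hCy⟩ := hy.2.1
  obtain ⟨Cx, hCx⟩ := hxnb
  obtain ⟨Cx0, hCx0'⟩ := hxb
  have hCy0 : 0 ≤ Cy := le_trans (abs_nonneg _) (hCy 0 ⟨le_rfl, hT'⟩)
  have hCxnn : 0 ≤ Cx := le_trans (abs_nonneg _) (hCx 0 0 ⟨le_rfl, hT'⟩)
  -- basic facts about B
  have hBm1 : B (-1) = 0 := hBneg (-1) (by norm_num)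
  have hB00 : 0 ≤ B 0 := by
    have := B.mono (show (-1:ℝ) ≤ 0 by norm_num); linarith
  have hBle1 : ∀ s, B s ≤ 1 := fun s => Monotone.ge_of_tendsto B.mono hBtop s
  have hleft : (0:ℝ) ≤ Function.leftLim (B : ℝ → ℝ) 0 := by
    have := B.mono.le_leftLim (show (-1:ℝ) < 0 by norm_num)
    linarith
  have hμle : ∀ r : ℝ, μ (Icc 0 r) ≤ ENNReal.ofReal (B r) := by
    intro r
    rw [hμdef, StieltjesFunction.measure_Icc]
    exact ENNReal.ofReal_le_ofReal (by linarith)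
  -- choice of q and ε
  set q := (B 0 + 1) / 2 with hqdef
  have hq0 : 0 ≤ q := by rw [hqdef]; linarith
  have hq1 : q < 1 := by rw [hqdef]; linarith
  have hqB : B 0 < q := by rw [hqdef]; linarith
  have hev : ∀ᶠ s in 𝓝[≥] (0:ℝ), B s < q :=
    (B.right_continuous 0).eventually_lt_const hqB
  obtain ⟨ε, hε, hsubε⟩ := mem_nhdsGE_iff_exists_Icc_subset.mp hev
  have hBε : B ε < q := hsubε ⟨hε.le, le_rfl⟩
  have hμε : μ (Icc 0 ε) ≤ ENNReal.ofReal q :=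
    le_trans (hμle ε) (ENNReal.ofReal_le_ofReal hBε.le)
  have hμT : μ (Icc 0 T) ≤ ENNReal.ofReal 1 :=
    le_trans (hμle T) (ENNReal.ofReal_le_ofReal (hBle1 T))
  have hμTfin : μ (Icc 0 T) ≠ ∞ :=
    ne_of_lt (lt_of_le_of_lt hμT ENNReal.ofReal_lt_top)
  obtain ⟨k₀, hk₀⟩ := exists_nat_ge (T / ε)
  have hk₀T : T ≤ (k₀ : ℝ) * ε := by
    rw [div_le_iff₀ hε] at hk₀; linarith
  -- clipped versions of y and yn
  set Y : ℝ → ℝ := IccExtend hT' (fun t : Icc (0:ℝ) T => y t) with hYdef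
  set Yn : ℕ → ℝ → ℝ := fun n => IccExtend hT' (fun t : Icc (0:ℝ) T => yn n t) with hYndef
  have hYeq : ∀ t (ht : t ∈ Icc (0:ℝ) T), Y t = y t := by
    intro t ht; rw [hYdef]; exact IccExtend_of_mem _ _ ht
  have hYneq : ∀ n t, t ∈ Icc (0:ℝ) T → Yn n t = yn n t := by
    intro n t ht; rw [hYndef]; exact IccExtend_of_mem _ _ ht
  have hYm : Measurable Y := hy.1.comp continuous_projIcc.measurable
  have hYnm : ∀ n, Measurable (Yn n) := fun n => (hyn n).1.comp continuous_projIcc.measurable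
  have hYb : ∀ τ, |Y τ| ≤ Cy := fun τ => hCy _ (projIcc 0 T hT' τ).2
  -- generic integrability helper
  have hIntOn : ∀ (g : ℝ → ℝ), Measurable g → ∀ (s : Set ℝ), MeasurableSet s →
      s ⊆ Icc 0 T → ∀ C : ℝ, (∀ τ ∈ s, |g τ| ≤ C) → IntegrableOn g s μ := by
    intro g hg s hsm hs C hC
    refine Measure.integrableOn_of_bounded (M := C)
      (ne_of_lt (lt_of_le_of_lt (measure_mono hs) (lt_of_le_of_lt hμT ENNReal.ofReal_lt_top)))
      hg.aestronglyMeasurable ?_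
    filter_upwards [ae_restrict_mem hsm] with τ hτ
    rw [Real.norm_eq_abs]; exact hC τ hτ
  -- membership facts
  have hsubT : ∀ t ∈ Icc (0:ℝ) T, Icc (0:ℝ) t ⊆ Icc 0 T :=
    fun t ht => Icc_subset_Icc le_rfl ht.2
  have hmem : ∀ t ∈ Icc (0:ℝ) T, ∀ s ∈ Icc (0:ℝ) t, t - s ∈ Icc (0:ℝ) T := by
    intro t ht s hs
    exact ⟨by linarith [hs.2], by linarith [hs.1, ht.2]⟩
  -- Step A : uniform bound on yn
  set K := gronK Cx q 1 k₀ with hKdef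
  have hK : ∀ n τ, |Yn n τ| ≤ K := by
    intro n
    obtain ⟨Cn, hCn⟩ := (hyn n).2.1
    have hYnb : ∀ τ, |Yn n τ| ≤ Cn := fun τ => hCn _ (projIcc 0 T hT' τ).2
    have H : ∀ t ∈ Icc (0:ℝ) T, |Yn n t| ≤ Cx + ∫ s in Icc (0:ℝ) t, |Yn n (t - s)| ∂μ := by
      intro t ht
      have heq := (hyn n).2.2 t ht
      have heq2 : ∫ s in Icc (0:ℝ) t, fn n (yn n (t - s)) (t - s) ∂μ
          = ∫ s in Icc (0:ℝ) t, fn n (Yn n (t - s)) (t - s) ∂μ := by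
        refine setIntegral_congr_fun measurableSet_Icc fun s hs => ?_
        rw [hYneq n (t - s) (hmem t ht s hs)]
      have hintm : Measurable (fun s : ℝ => fn n (Yn n (t - s)) (t - s)) :=
        (hfn n).1.comp (((hYnm n).comp (measurable_const.sub measurable_id)).prodMk
          (measurable_const.sub measurable_id))
      have hintm2 : Measurable (fun s : ℝ => |Yn n (t - s)|) :=
        ((hYnm n).comp (measurable_const.sub measurable_id)).abs
      have h2 : ‖∫ s in Icc (0:ℝ) t, fn n (Yn n (t - s)) (t - s) ∂μ‖
          ≤ ∫ s in Icc (0:ℝ) t, |Yn n (t - s)| ∂μ := by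
        refine le_trans (norm_integral_le_integral_norm _) ?_
        refine setIntegral_mono_on ?_ ?_ measurableSet_Icc ?_
        · refine (hIntOn _ hintm.norm _ measurableSet_Icc (hsubT t ht) Cn ?_)
          intro s hs
          rw [Real.norm_eq_abs, abs_abs, ← Real.norm_eq_abs]
          calc ‖fn n (Yn n (t - s)) (t - s)‖ = |fn n (Yn n (t - s)) (t - s)| := Real.norm_eq_abs _
            _ ≤ |Yn n (t - s)| := (hfn n).2.1 _ _ (hmem t ht s hs).1
            _ ≤ Cn := hYnb _
        · exact hIntOn _ hintm2 _ measurableSet_Icc (hsubT t ht) Cn (fun s _ => by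
            rw [abs_abs]; exact hYnb _)
        · intro s hs
          rw [Real.norm_eq_abs]
          exact (hfn n).2.1 _ _ (hmem t ht s hs).1
      have h1 : |Yn n t| ≤ |xn n t| + ‖∫ s in Icc (0:ℝ) t, fn n (Yn n (t - s)) (t - s) ∂μ‖ := by
        rw [hYneq n t ht, heq, heq2, Real.norm_eq_abs]
        exact abs_add_le _ _
      have := hCx n t ht
      linarith
    have := gronwall_window μ T ε q 1 Cx Cn hT' hε hq0 hq1 zero_le_one hCxnn hμε
      (by simpa using hμT) (fun τ => |Yn n τ|)
      ((hYnm n).abs) (fun τ => abs_nonneg _) hYnb H k₀ hk₀T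
    intro τ
    have h := this ((projIcc 0 T hT' τ) : ℝ) (projIcc 0 T hT' τ).2
    rw [hYneq n _ (projIcc 0 T hT' τ).2] at h
    calc |Yn n τ| = |yn n ((projIcc 0 T hT' τ) : ℝ)| := rfl
      _ ≤ K := h
  have hK0 : 0 ≤ K := le_trans (abs_nonneg _) (hK 0 0)
  -- Step B : the difference functions and their limsup
  set d : ℕ → ℝ → ℝ := fun n τ => |Yn n τ - Y τ| with hddef
  have hdm : ∀ n, Measurable (d n) := fun n => ((hYnm n).sub hYm).abs
  have hd0 : ∀ n τ, 0 ≤ d n τ := fun n τ => abs_nonneg _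
  set M2 := K + Cy with hM2def
  have hdb : ∀ n τ, d n τ ≤ M2 := by
    intro n τ
    calc d n τ ≤ |Yn n τ| + |Y τ| := abs_sub _ _
      _ ≤ M2 := add_le_add (hK n τ) (hYb τ)
  set E : ℕ → ℝ → ℝ := fun N τ => ⨆ m : ℕ, d (N + m) τ with hEdef
  set D : ℝ → ℝ := fun τ => ⨅ N : ℕ, E N τ with hDdef
  have hbddA : ∀ N τ, BddAbove (Set.range fun m : ℕ => d (N + m) τ) := fun N τ =>
    ⟨M2, by rintro _ ⟨m, rfl⟩; exact hdb _ _⟩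
  have hE_le : ∀ N τ, E N τ ≤ M2 := fun N τ => ciSup_le fun m => hdb _ _
  have hdE : ∀ N m τ, d (N + m) τ ≤ E N τ := fun N m τ => le_ciSup (hbddA N τ) m
  have hE0 : ∀ N τ, 0 ≤ E N τ := fun N τ =>
    le_trans (hd0 (N + 0) τ) (hdE N 0 τ)
  have hbddB : ∀ τ, BddBelow (Set.range fun N : ℕ => E N τ) := fun τ =>
    ⟨0, by rintro _ ⟨N, rfl⟩; exact hE0 _ _⟩
  have hD_le_E : ∀ N τ, D τ ≤ E N τ := fun N τ => ciInf_le (hbddB τ) N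
  have hD0 : ∀ τ, 0 ≤ D τ := fun τ => le_ciInf fun N => hE0 N τ
  have hD_le : ∀ τ, D τ ≤ M2 := fun τ => (hD_le_E 0 τ).trans (hE_le 0 τ)
  have hEanti : ∀ τ, Antitone fun N => E N τ := by
    intro τ
    refine antitone_nat_of_succ_le fun N => ?_
    refine ciSup_le fun m => ?_
    have h2 : N + 1 + m = N + (m + 1) := by omega
    rw [h2]
    exact hdE N (m + 1) τ
  have hEm : ∀ N, Measurable (E N) := fun N => Measurable.iSup fun m => hdm (N + m)
  have hDm : Measurable D := Measurable.iInf hEm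
  have hEtendsto : ∀ τ, Tendsto (fun N => E N τ) atTop (𝓝 (D τ)) := fun τ =>
    tendsto_atTop_ciInf (hEanti τ) (hbddB τ)
  -- the key inequality for D
  have HD : ∀ t ∈ Icc (0:ℝ) T, D t ≤ 0 + ∫ s in Icc (0:ℝ) t, D (t - s) ∂μ := by
    intro t ht
    set A : ℕ → ℝ := fun n => |xn n t - x t| with hAdef
    set Bq : ℕ → ℝ := fun n =>
      ∫ s in Icc (0:ℝ) t, |fn n (Y (t - s)) (t - s) - f (Y (t - s)) (t - s)| ∂μ with hBqdef
    -- measurability of integrands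
    have hm1 : ∀ n, Measurable fun s : ℝ => fn n (Yn n (t - s)) (t - s) := fun n =>
      (hfn n).1.comp (((hYnm n).comp (measurable_const.sub measurable_id)).prodMk
        (measurable_const.sub measurable_id))
    have hm2 : Measurable fun s : ℝ => f (Y (t - s)) (t - s) :=
      hf.1.comp ((hYm.comp (measurable_const.sub measurable_id)).prodMk
        (measurable_const.sub measurable_id))
    have hm3 : ∀ n, Measurable fun s : ℝ => fn n (Y (t - s)) (t - s) := fun n =>
      (hfn n).1.comp ((hYm.comp (measurable_const.sub measurable_id)).prodMk
        (measurable_const.sub measurable_id))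
    have hm4 : ∀ n, Measurable fun s : ℝ => d n (t - s) := fun n =>
      (hdm n).comp (measurable_const.sub measurable_id)
    have hm6 : ∀ N, Measurable fun s : ℝ => E N (t - s) := fun N =>
      (hEm N).comp (measurable_const.sub measurable_id)
    have hm7 : Measurable fun s : ℝ => D (t - s) :=
      hDm.comp (measurable_const.sub measurable_id)
    -- integrability
    have i1 : ∀ n, IntegrableOn (fun s => fn n (Yn n (t - s)) (t - s)) (Icc 0 t) μ := by
      intro n
      refine hIntOn _ (hm1 n) _ measurableSet_Icc (hsubT t ht) K fun s hs => ?_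
      exact le_trans ((hfn n).2.1 _ _ (hmem t ht s hs).1) (hK n _)
    have i2 : IntegrableOn (fun s => f (Y (t - s)) (t - s)) (Icc 0 t) μ := by
      refine hIntOn _ hm2 _ measurableSet_Icc (hsubT t ht) Cy fun s hs => ?_
      exact le_trans (hf.2.1 _ _ (hmem t ht s hs).1) (hYb _)
    have i4 : ∀ n, IntegrableOn (fun s => d n (t - s)) (Icc 0 t) μ := fun n =>
      hIntOn _ (hm4 n) _ measurableSet_Icc (hsubT t ht) M2 fun s _ => by
        rw [abs_of_nonneg (hd0 n _)]; exact hdb n _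
    have i5 : ∀ n, IntegrableOn
        (fun s => |fn n (Y (t - s)) (t - s) - f (Y (t - s)) (t - s)|) (Icc 0 t) μ := by
      intro n
      refine hIntOn _ ((hm3 n).sub hm2).abs _ measurableSet_Icc (hsubT t ht) (2 * Cy)
        fun s hs => ?_
      rw [abs_abs]
      calc |fn n (Y (t - s)) (t - s) - f (Y (t - s)) (t - s)|
          ≤ |fn n (Y (t - s)) (t - s)| + |f (Y (t - s)) (t - s)| := abs_sub _ _
        _ ≤ |Y (t - s)| + |Y (t - s)| :=
            add_le_add ((hfn n).2.1 _ _ (hmem t ht s hs).1) (hf.2.1 _ _ (hmem t ht s hs).1)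
        _ ≤ 2 * Cy := by have := hYb (t - s); linarith
    have i6 : ∀ N, IntegrableOn (fun s => E N (t - s)) (Icc 0 t) μ := fun N =>
      hIntOn _ (hm6 N) _ measurableSet_Icc (hsubT t ht) M2 fun s _ => by
        rw [abs_of_nonneg (hE0 N _)]; exact hE_le N _
    have i7 : IntegrableOn (fun s => D (t - s)) (Icc 0 t) μ :=
      hIntOn _ hm7 _ measurableSet_Icc (hsubT t ht) M2 fun s _ => by
        rw [abs_of_nonneg (hD0 _)]; exact hD_le _
    -- the per-n inequality
    have hstep : ∀ n, d n t ≤ A n + Bq n + ∫ s in Icc (0:ℝ) t, d n (t - s) ∂μ := by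
      intro n
      have heqn := (hyn n).2.2 t ht
      have heqy := hy.2.2 t ht
      have heq2 : ∫ s in Icc (0:ℝ) t, fn n (yn n (t - s)) (t - s) ∂μ
          = ∫ s in Icc (0:ℝ) t, fn n (Yn n (t - s)) (t - s) ∂μ :=
        setIntegral_congr_fun measurableSet_Icc fun s hs => by
          rw [hYneq n (t - s) (hmem t ht s hs)]
      have heq3 : ∫ s in Icc (0:ℝ) t, f (y (t - s)) (t - s) ∂μ
          = ∫ s in Icc (0:ℝ) t, f (Y (t - s)) (t - s) ∂μ :=
        setIntegral_congr_fun measurableSet_Icc fun s hs => by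
          rw [hYeq (t - s) (hmem t ht s hs)]
      have hd : d n t = |(xn n t - x t) +
          ∫ s in Icc (0:ℝ) t,
            (fn n (Yn n (t - s)) (t - s) - f (Y (t - s)) (t - s)) ∂μ| := by
        rw [hddef]
        simp only []
        rw [hYneq n t ht, hYeq t ht, heqn, heqy, heq2, heq3,
          integral_sub (i1 n) i2]
        congr 1
        ring
      have hptw : ∀ s ∈ Icc (0:ℝ) t,
          ‖fn n (Yn n (t - s)) (t - s) - f (Y (t - s)) (t - s)‖
          ≤ d n (t - s) + |fn n (Y (t - s)) (t - s) - f (Y (t - s)) (t - s)| := by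
        intro s hs
        rw [Real.norm_eq_abs]
        calc |fn n (Yn n (t - s)) (t - s) - f (Y (t - s)) (t - s)|
            ≤ |fn n (Yn n (t - s)) (t - s) - fn n (Y (t - s)) (t - s)| +
              |fn n (Y (t - s)) (t - s) - f (Y (t - s)) (t - s)| := abs_sub_le _ _ _
          _ ≤ d n (t - s) + |fn n (Y (t - s)) (t - s) - f (Y (t - s)) (t - s)| := by
              have := (hfn n).2.2 (Yn n (t - s)) (Y (t - s)) (t - s) (hmem t ht s hs).1
              have hdd : d n (t - s) = |Yn n (t - s) - Y (t - s)| := rfl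
              linarith
      have h2 : ‖∫ s in Icc (0:ℝ) t,
          (fn n (Yn n (t - s)) (t - s) - f (Y (t - s)) (t - s)) ∂μ‖
          ≤ ∫ s in Icc (0:ℝ) t,
            (d n (t - s) + |fn n (Y (t - s)) (t - s) - f (Y (t - s)) (t - s)|) ∂μ := by
        refine le_trans (norm_integral_le_integral_norm _) ?_
        refine setIntegral_mono_on ?_ ((i4 n).add (i5 n)) measurableSet_Icc hptw
        exact ((i1 n).sub i2).norm
      rw [integral_add (i4 n) (i5 n)] at h2
      have h3 : d n t ≤ A n + ‖∫ s in Icc (0:ℝ) t,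
          (fn n (Yn n (t - s)) (t - s) - f (Y (t - s)) (t - s)) ∂μ‖ := by
        rw [hd, Real.norm_eq_abs]
        exact abs_add_le _ _
      rw [hBqdef]
      simp only []
      linarith
    -- bound for A n + Bq n
    have hμt1 : (μ (Icc (0:ℝ) t)).toReal ≤ 1 :=
      ENNReal.toReal_le_of_le_ofReal one_pos.le
        (le_trans (measure_mono (hsubT t ht)) hμT)
    have hμtfin : μ (Icc (0:ℝ) t) < ∞ :=
      lt_of_le_of_lt (measure_mono (hsubT t ht)) (lt_of_le_of_lt hμT ENNReal.ofReal_lt_top)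
    have hABb : ∀ n, A n + Bq n ≤ Cx + Cx0 + 2 * Cy := by
      intro n
      have hA : A n ≤ Cx + Cx0 := by
        rw [hAdef]
        calc |xn n t - x t| ≤ |xn n t| + |x t| := abs_sub _ _
          _ ≤ Cx + Cx0 := add_le_add (hCx n t ht) (hCx0' t ht)
      have hBq : Bq n ≤ 2 * Cy := by
        have hbnd : ∀ s ∈ Icc (0:ℝ) t,
            ‖|fn n (Y (t - s)) (t - s) - f (Y (t - s)) (t - s)|‖ ≤ 2 * Cy := by
          intro s hs
          rw [Real.norm_eq_abs, abs_abs]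
          calc |fn n (Y (t - s)) (t - s) - f (Y (t - s)) (t - s)|
              ≤ |fn n (Y (t - s)) (t - s)| + |f (Y (t - s)) (t - s)| := abs_sub _ _
            _ ≤ |Y (t - s)| + |Y (t - s)| :=
                add_le_add ((hfn n).2.1 _ _ (hmem t ht s hs).1) (hf.2.1 _ _ (hmem t ht s hs).1)
            _ ≤ 2 * Cy := by have := hYb (t - s); linarith
        have h := norm_setIntegral_le_of_norm_le_const hμtfin hbnd
        have h2 := le_trans (le_abs_self _) (le_of_eq (Real.norm_eq_abs _).symm |>.trans h)
        rw [hBqdef]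
        refine le_trans h2 ?_
        have h3 : (0:ℝ) ≤ 2 * Cy := by linarith
        rw [measureReal_def]
        nlinarith [hμt1, ENNReal.toReal_nonneg (a := μ (Icc (0:ℝ) t))]
      linarith
    have hAB0 : ∀ n, 0 ≤ A n + Bq n := by
      intro n
      have hBq0 : 0 ≤ Bq n := setIntegral_nonneg measurableSet_Icc fun s _ => abs_nonneg _
      have := abs_nonneg (xn n t - x t)
      rw [hAdef]; positivity
    -- A n + Bq n tends to 0
    have hAtend : Tendsto A atTop (𝓝 0) := by
      have := (hxnpt t ht).sub (tendsto_const_nhds (x := x t))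
      have h := this.abs
      simpa using h
    have hBtend : Tendsto Bq atTop (𝓝 0) := by
      have h := tendsto_integral_of_dominated_convergence
        (F := fun n (s : ℝ) => |fn n (Y (t - s)) (t - s) - f (Y (t - s)) (t - s)|)
        (f := fun _ : ℝ => (0:ℝ)) (bound := fun _ => 2 * Cy)
        (μ := μ.restrict (Icc 0 t))
        (fun n => (((hm3 n).sub hm2).abs).aestronglyMeasurable)
        ?_ ?_ ?_
      · rw [hBqdef]; simpa using h
      · exact integrableOn_const (C := 2 * Cy) hμtfin.ne
      · intro n
        filter_upwards [ae_restrict_mem measurableSet_Icc] with s hs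
        rw [Real.norm_eq_abs, abs_abs]
        calc |fn n (Y (t - s)) (t - s) - f (Y (t - s)) (t - s)|
            ≤ |fn n (Y (t - s)) (t - s)| + |f (Y (t - s)) (t - s)| := abs_sub _ _
          _ ≤ |Y (t - s)| + |Y (t - s)| :=
              add_le_add ((hfn n).2.1 _ _ (hmem t ht s hs).1) (hf.2.1 _ _ (hmem t ht s hs).1)
          _ ≤ 2 * Cy := by have := hYb (t - s); linarith
      · filter_upwards [ae_restrict_mem measurableSet_Icc] with s hs
        have := (hfpt (Y (t - s)) (t - s) (hmem t ht s hs).1).sub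
          (tendsto_const_nhds (x := f (Y (t - s)) (t - s)))
        simpa using this.abs
    have hABtend : Tendsto (fun n => A n + Bq n) atTop (𝓝 0) := by
      have := hAtend.add hBtend
      simpa using this
    -- tail sups of A + Bq tend to 0
    set SN : ℕ → ℝ := fun N => ⨆ m : ℕ, (A (N + m) + Bq (N + m)) with hSNdef
    have hSNtend : Tendsto SN atTop (𝓝 0) :=
      tendsto_tail_sup (Cx + Cx0 + 2 * Cy) hAB0 hABb hABtend
    have hSNbdd : ∀ N, BddAbove (Set.range fun m : ℕ => A (N + m) + Bq (N + m)) := fun N =>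
      ⟨Cx + Cx0 + 2 * Cy, by rintro _ ⟨m, rfl⟩; exact hABb _⟩
    -- per-N inequality for E
    have hstep2 : ∀ N, E N t ≤ SN N + ∫ s in Icc (0:ℝ) t, E N (t - s) ∂μ := by
      intro N
      refine ciSup_le fun m => ?_
      have h1 := hstep (N + m)
      have h2 : ∫ s in Icc (0:ℝ) t, d (N + m) (t - s) ∂μ
          ≤ ∫ s in Icc (0:ℝ) t, E N (t - s) ∂μ :=
        setIntegral_mono_on (i4 (N + m)) (i6 N) measurableSet_Icc fun s _ => hdE N m (t - s)
      have h3 : A (N + m) + Bq (N + m) ≤ SN N := le_ciSup (hSNbdd N) m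
      linarith
    -- convergence of the integrals of E N
    have hItend : Tendsto (fun N => ∫ s in Icc (0:ℝ) t, E N (t - s) ∂μ) atTop
        (𝓝 (∫ s in Icc (0:ℝ) t, D (t - s) ∂μ)) := by
      refine tendsto_integral_of_dominated_convergence (bound := fun _ => M2)
        (fun N => (hm6 N).aestronglyMeasurable) ?_ ?_ ?_
      · exact integrableOn_const (C := M2) hμtfin.ne
      · intro N
        filter_upwards with s
        rw [Real.norm_eq_abs, abs_of_nonneg (hE0 N _)]
        exact hE_le N _
      · filter_upwards with s
        exact hEtendsto (t - s)
    have hDt : ∀ N, D t ≤ SN N + ∫ s in Icc (0:ℝ) t, E N (t - s) ∂μ := fun N =>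
      (hD_le_E N t).trans (hstep2 N)
    have hlim : Tendsto (fun N => SN N + ∫ s in Icc (0:ℝ) t, E N (t - s) ∂μ) atTop
        (𝓝 (0 + ∫ s in Icc (0:ℝ) t, D (t - s) ∂μ)) := hSNtend.add hItend
    exact ge_of_tendsto' hlim hDt
  -- apply Gronwall with a = 0
  have hDzero : ∀ t ∈ Icc (0:ℝ) T, D t = 0 := by
    have h := gronwall_window μ T ε q 1 0 M2 hT' hε hq0 hq1 zero_le_one le_rfl hμε
      (by simpa using hμT) D hDm hD0 hD_le HD k₀ hk₀T
    intro t ht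
    have := h t ht
    rw [gronK_zero] at this
    exact le_antisymm this (hD0 t)
  -- conclusion
  intro t ht
  have hE0t : Tendsto (fun n => E n t) atTop (𝓝 0) := by
    have := hEtendsto t
    rwa [hDzero t ht] at this
  have hdt : Tendsto (fun n => d n t) atTop (𝓝 0) := by
    refine tendsto_of_tendsto_of_tendsto_of_le_of_le tendsto_const_nhds hE0t
      (fun n => hd0 n t) (fun n => ?_)
    have := hdE n 0 t
    simpa using this
  rw [tendsto_iff_dist_tendsto_zero]
  have heq : (fun n => dist (yn n t) (y t)) = fun n => d n t := by
    funext n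
    rw [Real.dist_eq, hddef]
    simp only []
    rw [hYneq n t ht, hYeq t ht]
  rwa [heq]
end

section
/- Let ξ be a nonnegative random variable with distribution function F(u) = P(ξ ≤ u), and write F(u−) = P(ξ < u) for the left-hand limit; let dF denote the Lebesgue–Stieltjes measure of F. Then for all 0 ≤ x ≤ y, E[∫_{(x,y]} 1{u ≤ ξ}·(1 − F(u−))^{−1} dF(u)] = F(y) − F(x), where the integrand is taken to be 0 on the set {u : F(u−) = 1} (which has dF-measure zero); equivalently, E[1{x < ξ ≤ y} − ∫_{(x,y]} 1{u ≤ ξ}·(1 − F(u−))^{−1} dF(u)] = 0. -/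
open MeasureTheory Filter Set Topology
open scoped ENNReal

/-- The set where the left limit of the distribution function equals 1 is null
for the law of `ξ`. -/
lemma map_null_Fm_one {Ω : Type*} [MeasurableSpace Ω] (μ : Measure Ω)
    [IsProbabilityMeasure μ] (ξ : Ω → ℝ) (hξm : Measurable ξ) (hξ0 : ∀ ω, 0 ≤ ξ ω) :
    μ.map ξ {u : ℝ | μ {ω' | ξ ω' < u} = 1} = 0 := by
  classical
  set S : Set ℝ := {u : ℝ | μ {ω' | ξ ω' < u} = 1} with hS
  have hup : ∀ u ∈ S, ∀ v, u ≤ v → v ∈ S := by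
    intro u hu v huv
    have h1 : μ {ω' | ξ ω' < u} ≤ μ {ω' | ξ ω' < v} :=
      measure_mono fun ω h => lt_of_lt_of_le h huv
    have hu' : μ {ω' | ξ ω' < u} = 1 := hu
    exact le_antisymm prob_le_one (hu' ▸ h1)
  have hnull : ∀ u ∈ S, μ {ω | u ≤ ξ ω} = 0 := by
    intro u hu
    have hc : {ω | u ≤ ξ ω} = {ω | ξ ω < u}ᶜ := by ext ω; simp [not_lt]
    have hu' : μ {ω' | ξ ω' < u} = 1 := hu
    have hms : MeasurableSet {ω | ξ ω < u} := hξm measurableSet_Iio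
    rw [hc, measure_compl hms (measure_ne_top μ _), measure_univ, hu', tsub_self]
  rcases eq_empty_or_nonempty S with h | h
  · rw [h]; simp
  · have hbdd : BddBelow S := by
      refine ⟨0, fun u hu => ?_⟩
      have hu' : μ {ω' | ξ ω' < u} = 1 := hu
      have hne : {ω' | ξ ω' < u}.Nonempty := by
        apply nonempty_of_measure_ne_zero (μ := μ)
        rw [hu']; exact one_ne_zero
      obtain ⟨ω, hω⟩ := hne
      exact le_of_lt (lt_of_le_of_lt (hξ0 ω) hω)
    set t : ℝ := sInf S with ht
    by_cases htS : t ∈ S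
    · -- S ⊆ Ici t and {t ≤ ξ} is null
      have hsub : ξ ⁻¹' S ⊆ {ω | t ≤ ξ ω} := fun ω hω => csInf_le hbdd hω
      have h0 : μ (ξ ⁻¹' S) = 0 := measure_mono_null hsub (hnull t htS)
      have hSm : MeasurableSet S := by
        have : S = Ici t := by
          apply Subset.antisymm (fun u hu => csInf_le hbdd hu)
          exact fun u hu => hup t htS u hu
        rw [this]; exact measurableSet_Ici
      rw [Measure.map_apply hξm hSm, h0]
    · -- S = Ioi t
      have hSIoi : S = Ioi t := by
        apply Subset.antisymm
        · intro u hu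
          have : t ≤ u := csInf_le hbdd hu
          rcases this.lt_or_eq with h' | h'
          · exact h'
          · exact absurd (h' ▸ hu) htS
        · intro u hu
          obtain ⟨s, hsS, hsu⟩ := (csInf_lt_iff hbdd h).mp hu
          exact hup s hsS u hsu.le
      have hsub : ξ ⁻¹' S ⊆ ⋃ n : ℕ, {ω | t + 1 / (n + 1) ≤ ξ ω} := by
        intro ω hω
        have h1 : t < ξ ω := by have := hSIoi ▸ hω; exact this
        obtain ⟨n, hn⟩ := exists_nat_one_div_lt (sub_pos.mpr h1)
        exact mem_iUnion.mpr ⟨n, by simp only [mem_setOf_eq]; linarith⟩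
      have h0 : μ (ξ ⁻¹' S) = 0 := by
        refine measure_mono_null hsub (measure_iUnion_null fun n => hnull _ ?_)
        rw [hSIoi]
        have : (0 : ℝ) < 1 / (n + 1) := by positivity
        simpa using this
      rw [Measure.map_apply hξm (hSIoi ▸ measurableSet_Ioi), h0]
/-- The compensator identity for the distribution function of a nonnegative random
variable: `E ∫_{(x,y]} 1{u ≤ ξ} (1 - F(u-))⁻¹ dF(u) = F(y) - F(x)`, and equivalently
`E [1{x < ξ ≤ y} - ∫_{(x,y]} 1{u ≤ ξ} (1 - F(u-))⁻¹ dF(u)] = 0`.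
Here `dF` is the Lebesgue–Stieltjes measure of `F`, i.e. the law `μ.map ξ` of `ξ`,
`F u = P(ξ ≤ u)`, `F(u-) = P(ξ < u)`, and the integrand vanishes on `{u : F(u-) = 1}`
(in Lean this is automatic since `(1 - 1)⁻¹ = 0⁻¹ = 0`). -/
theorem compensator_mean_eq
    {Ω : Type*} [MeasurableSpace Ω] (μ : Measure Ω) [IsProbabilityMeasure μ]
    (ξ : Ω → ℝ) (hξm : Measurable ξ) (hξ0 : ∀ ω, 0 ≤ ξ ω)
    (x y : ℝ) (hx : 0 ≤ x) (hxy : x ≤ y) :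
    (∫ ω, (∫ u in Set.Ioc x y,
        (if u ≤ ξ ω then (1 - (μ {ω' | ξ ω' < u}).toReal)⁻¹ else 0)
          ∂(μ.map ξ)) ∂μ)
      = (μ {ω | ξ ω ≤ y}).toReal - (μ {ω | ξ ω ≤ x}).toReal ∧
    (∫ ω, ((if x < ξ ω ∧ ξ ω ≤ y then (1 : ℝ) else 0)
        - ∫ u in Set.Ioc x y,
            (if u ≤ ξ ω then (1 - (μ {ω' | ξ ω' < u}).toReal)⁻¹ else 0)
          ∂(μ.map ξ)) ∂μ) = 0 := by
  classical
  have hprobν : IsProbabilityMeasure (μ.map ξ) := Measure.isProbabilityMeasure_map hξm.aemeasurable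
  -- basic facts about Fm u = μ {ξ < u}
  have hFm_mono : Monotone (fun u : ℝ => μ {ω' | ξ ω' < u}) :=
    fun u v huv => measure_mono fun ω h => lt_of_lt_of_le h huv
  have hFm_meas : Measurable (fun u : ℝ => μ {ω' | ξ ω' < u}) := hFm_mono.measurable
  have hFm_le : ∀ u : ℝ, μ {ω' | ξ ω' < u} ≤ 1 := fun u => prob_le_one
  have hFm_ne_top : ∀ u : ℝ, μ {ω' | ξ ω' < u} ≠ ⊤ := fun u => measure_ne_top μ _
  have hgR_nonneg : ∀ u : ℝ, 0 ≤ (1 - (μ {ω' | ξ ω' < u}).toReal)⁻¹ := by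
    intro u
    apply inv_nonneg.mpr
    have h1 : (μ {ω' | ξ ω' < u}).toReal ≤ 1 := by
      have := ENNReal.toReal_mono ENNReal.one_ne_top (hFm_le u)
      simpa using this
    linarith
  have hg_meas : Measurable (fun u : ℝ => (1 - (μ {ω' | ξ ω' < u}).toReal)⁻¹) :=
    (measurable_const.sub hFm_meas.ennreal_toReal).inv
  -- the ENNReal-valued kernel
  set H : Ω × ℝ → ℝ≥0∞ := fun p =>
    if p.2 ≤ ξ p.1 then ENNReal.ofReal ((1 - (μ {ω' | ξ ω' < p.2}).toReal)⁻¹) else 0 with hHdef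
  have hsetm : MeasurableSet {p : Ω × ℝ | p.2 ≤ ξ p.1} :=
    measurableSet_le measurable_snd (hξm.comp measurable_fst)
  have hH_meas : Measurable H :=
    Measurable.ite hsetm ((ENNReal.measurable_ofReal.comp hg_meas).comp measurable_snd)
      measurable_const
  set φ : Ω → ℝ≥0∞ := fun ω => ∫⁻ u in Set.Ioc x y, H (ω, u) ∂(μ.map ξ) with hφdef
  have hφ_meas : Measurable φ := hH_meas.lintegral_prod_right'
  -- inner Bochner integral equals toReal of inner lintegral
  have hinner : ∀ ω, (∫ u in Set.Ioc x y,
      (if u ≤ ξ ω then (1 - (μ {ω' | ξ ω' < u}).toReal)⁻¹ else 0) ∂(μ.map ξ)) = (φ ω).toReal := by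
    intro ω
    rw [integral_eq_lintegral_of_nonneg_ae]
    · congr 1
      refine lintegral_congr fun u => ?_
      by_cases h : u ≤ ξ ω <;> simp [hHdef, h]
    · exact Eventually.of_forall fun u => by
        by_cases h : u ≤ ξ ω <;> simp [h, hgR_nonneg u]
    · exact ((hg_meas.ite (measurableSet_le measurable_id measurable_const)
        measurable_const)).aestronglyMeasurable
  -- μ {u ≤ ξ} = 1 - Fm u
  have hcompl : ∀ u : ℝ, μ {ω | u ≤ ξ ω} = 1 - μ {ω' | ξ ω' < u} := by
    intro u
    have hc : {ω | u ≤ ξ ω} = {ω | ξ ω < u}ᶜ := by ext ω; simp [not_lt]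
    have hms : MeasurableSet {ω | ξ ω < u} := hξm measurableSet_Iio
    rw [hc, measure_compl hms (measure_ne_top μ _), measure_univ]
  -- pointwise identity
  have hpoint : ∀ u : ℝ, ENNReal.ofReal ((1 - (μ {ω' | ξ ω' < u}).toReal)⁻¹)
      * (1 - μ {ω' | ξ ω' < u}) = if μ {ω' | ξ ω' < u} = 1 then 0 else 1 := by
    intro u
    by_cases h : μ {ω' | ξ ω' < u} = 1
    · simp [h]
    · have hlt : μ {ω' | ξ ω' < u} < 1 := lt_of_le_of_ne (hFm_le u) h
      have htR : (μ {ω' | ξ ω' < u}).toReal < 1 := by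
        have := (ENNReal.toReal_lt_toReal (hFm_ne_top u) ENNReal.one_ne_top).mpr hlt
        simpa using this
      have h1 : (1 : ℝ≥0∞) - μ {ω' | ξ ω' < u}
          = ENNReal.ofReal (1 - (μ {ω' | ξ ω' < u}).toReal) := by
        rw [← ENNReal.ofReal_toReal (a := (1 : ℝ≥0∞) - μ {ω' | ξ ω' < u}) (by
          exact (tsub_le_self.trans_lt (by simp : (1:ℝ≥0∞) < ⊤)).ne)]
        congr 1
        rw [ENNReal.toReal_sub_of_le hlt.le ENNReal.one_ne_top, ENNReal.toReal_one]
      rw [h1, ← ENNReal.ofReal_mul (hgR_nonneg u), if_neg h,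
        inv_mul_cancel₀ (by linarith : (1 : ℝ) - (μ {ω' | ξ ω' < u}).toReal ≠ 0)]
      simp
  -- Tonelli: total lintegral
  have htotal : ∫⁻ ω, φ ω ∂μ = (μ.map ξ) (Set.Ioc x y) := by
    have hswap := lintegral_lintegral_swap (μ := μ)
      (ν := (μ.map ξ).restrict (Set.Ioc x y)) (f := fun ω u => H (ω, u))
      (hH_meas.aemeasurable)
    simp only [hφdef]
    rw [hswap]
    have hstep : ∀ u : ℝ, (∫⁻ ω, H (ω, u) ∂μ)
        = (if μ {ω' | ξ ω' < u} = 1 then 0 else 1 : ℝ≥0∞) := by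
      intro u
      have hind : (fun ω => H (ω, u)) = ({ω | u ≤ ξ ω}).indicator
          (fun _ => ENNReal.ofReal ((1 - (μ {ω' | ξ ω' < u}).toReal)⁻¹)) := by
        ext ω
        by_cases h : u ≤ ξ ω <;> simp [hHdef, h, Set.indicator_apply]
      rw [hind, lintegral_indicator_const (by
          have : {ω | u ≤ ξ ω} = ξ ⁻¹' Set.Ici u := rfl
          rw [this]; exact hξm measurableSet_Ici),
        hcompl u, hpoint u]
    calc ∫⁻ u in Set.Ioc x y, ∫⁻ ω, H (ω, u) ∂μ ∂(μ.map ξ)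
        = ∫⁻ u in Set.Ioc x y, (if μ {ω' | ξ ω' < u} = 1 then 0 else 1 : ℝ≥0∞)
            ∂(μ.map ξ) := lintegral_congr fun u => hstep u
      _ = ∫⁻ _ in Set.Ioc x y, (1 : ℝ≥0∞) ∂(μ.map ξ) := by
          refine lintegral_congr_ae (ae_restrict_of_ae ?_)
          have hnull := map_null_Fm_one μ ξ hξm hξ0
          have hae : ∀ᵐ u ∂(μ.map ξ), μ {ω' | ξ ω' < u} ≠ 1 := by
            rw [ae_iff]
            simpa using hnull
          filter_upwards [hae] with u hu
          rw [if_neg hu]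
      _ = (μ.map ξ) (Set.Ioc x y) := by simp
  -- a.e. finiteness of φ
  have hφfin : ∀ᵐ ω ∂μ, φ ω < ⊤ :=
    ae_lt_top hφ_meas (by rw [htotal]; exact measure_ne_top _ _)
  have houter : (∫ ω, (φ ω).toReal ∂μ) = ((μ.map ξ) (Set.Ioc x y)).toReal := by
    rw [integral_eq_lintegral_of_nonneg_ae (Eventually.of_forall fun ω => ENNReal.toReal_nonneg)
      hφ_meas.ennreal_toReal.aestronglyMeasurable]
    congr 1
    rw [← htotal]
    refine lintegral_congr_ae ?_
    filter_upwards [hφfin] with ω hω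
    exact ENNReal.ofReal_toReal hω.ne
  have hsubxy : {ω | ξ ω ≤ x} ⊆ {ω | ξ ω ≤ y} := fun ω h => le_trans h hxy
  have hIoc : (μ.map ξ) (Set.Ioc x y) = μ {ω | ξ ω ≤ y} - μ {ω | ξ ω ≤ x} := by
    rw [Measure.map_apply hξm measurableSet_Ioc]
    have hpre : ξ ⁻¹' Set.Ioc x y = {ω | ξ ω ≤ y} \ {ω | ξ ω ≤ x} := by
      ext ω
      simp only [Set.mem_preimage, Set.mem_Ioc, Set.mem_diff, Set.mem_setOf_eq, not_le]
      tauto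
    rw [hpre,
      measure_diff hsubxy (hξm measurableSet_Iic).nullMeasurableSet (measure_ne_top μ _)]
  have hIocToReal : ((μ.map ξ) (Set.Ioc x y)).toReal
      = (μ {ω | ξ ω ≤ y}).toReal - (μ {ω | ξ ω ≤ x}).toReal := by
    rw [hIoc, ENNReal.toReal_sub_of_le (measure_mono hsubxy) (measure_ne_top μ _)]
  have hfirst : (∫ ω, (∫ u in Set.Ioc x y,
      (if u ≤ ξ ω then (1 - (μ {ω' | ξ ω' < u}).toReal)⁻¹ else 0) ∂(μ.map ξ)) ∂μ)
      = (μ {ω | ξ ω ≤ y}).toReal - (μ {ω | ξ ω ≤ x}).toReal := by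
    calc (∫ ω, (∫ u in Set.Ioc x y,
        (if u ≤ ξ ω then (1 - (μ {ω' | ξ ω' < u}).toReal)⁻¹ else 0) ∂(μ.map ξ)) ∂μ)
        = ∫ ω, (φ ω).toReal ∂μ := integral_congr_ae (Eventually.of_forall fun ω => hinner ω)
      _ = ((μ.map ξ) (Set.Ioc x y)).toReal := houter
      _ = _ := hIocToReal
  refine ⟨hfirst, ?_⟩
  -- second conjunct
  have hmeas_event : MeasurableSet {ω | x < ξ ω ∧ ξ ω ≤ y} := by
    have : {ω | x < ξ ω ∧ ξ ω ≤ y} = ξ ⁻¹' Set.Ioc x y := rfl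
    rw [this]; exact hξm measurableSet_Ioc
  have hind_eq : (fun ω => if x < ξ ω ∧ ξ ω ≤ y then (1:ℝ) else 0)
      = ({ω | x < ξ ω ∧ ξ ω ≤ y}).indicator (fun _ => (1:ℝ)) := by
    ext ω; by_cases h : x < ξ ω ∧ ξ ω ≤ y <;> simp [h, Set.indicator_apply]
  have hindint : Integrable (fun ω => if x < ξ ω ∧ ξ ω ≤ y then (1:ℝ) else 0) μ := by
    rw [hind_eq]
    exact (integrable_const (1:ℝ)).indicator hmeas_event
  have hφint : Integrable (fun ω => (φ ω).toReal) μ := by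
    refine ⟨hφ_meas.ennreal_toReal.aestronglyMeasurable, ?_⟩
    rw [hasFiniteIntegral_iff_ofReal (Eventually.of_forall fun ω => ENNReal.toReal_nonneg)]
    calc ∫⁻ ω, ENNReal.ofReal ((φ ω).toReal) ∂μ ≤ ∫⁻ ω, φ ω ∂μ :=
          lintegral_mono fun ω => ENNReal.ofReal_toReal_le
      _ < ⊤ := by rw [htotal]; exact measure_lt_top _ _
  have hinnerint : Integrable (fun ω => ∫ u in Set.Ioc x y,
      (if u ≤ ξ ω then (1 - (μ {ω' | ξ ω' < u}).toReal)⁻¹ else 0) ∂(μ.map ξ)) μ :=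
    hφint.congr (Eventually.of_forall fun ω => (hinner ω).symm)
  rw [integral_sub hindint hinnerint, hfirst]
  have hindval : ∫ ω, (if x < ξ ω ∧ ξ ω ≤ y then (1:ℝ) else 0) ∂μ
      = (μ {ω | x < ξ ω ∧ ξ ω ≤ y}).toReal := by
    rw [hind_eq, integral_indicator_const (1:ℝ) hmeas_event]
    simp
    rfl
  have hpre2 : μ {ω | x < ξ ω ∧ ξ ω ≤ y} = (μ.map ξ) (Set.Ioc x y) := by
    rw [Measure.map_apply hξm measurableSet_Ioc]
    rfl
  rw [hindval, hpre2, hIocToReal, sub_self]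
end

section
/- Let ξ be a nonnegative random variable with distribution function F(u) = P(ξ ≤ u), and write F(u−) = P(ξ < u); let dF denote the Lebesgue–Stieltjes measure of F. Then for all 0 ≤ x ≤ y, E[(1{x < ξ ≤ y} − ∫_{(x,y]} 1{u ≤ ξ}·(1 − F(u−))^{−1} dF(u))²] = E[∫_{(x,y]} 1{u ≤ ξ}·(1 − F(u))·(1 − F(u−))^{−2} dF(u)], where the integrands are taken to be 0 on the set {u : F(u−) = 1} (which has dF-measure zero), and both sides are finite. -/
open MeasureTheory Filter Set Topology
open scoped ENNReal
set_option linter.unusedSectionVars false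
set_option maxHeartbeats 1000000

namespace CompSM

variable (ν : Measure ℝ)

noncomputable def sg (u : ℝ) : ℝ≥0∞ := (ν (Ici u))⁻¹

lemma meas_q : Measurable fun u => ν (Ici u) := by
  have h : Antitone fun u => ν (Ici u) := fun a b hab => measure_mono (Ici_subset_Ici.2 hab)
  exact h.measurable

lemma meas_sg : Measurable (sg ν) := (meas_q ν).inv

lemma meas_qo (y : ℝ) : Measurable fun u => ν (Ioc u y) := by
  have h : Antitone fun u => ν (Ioc u y) := fun a b hab => measure_mono (Ioc_subset_Ioc_left hab)
  exact h.measurable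

lemma meas_qoi : Measurable fun u => ν (Ioi u) := by
  have h : Antitone fun u => ν (Ioi u) := fun a b hab => measure_mono (Ioi_subset_Ioi hab)
  exact h.measurable

variable [IsProbabilityMeasure ν]

lemma atom_eq (u : ℝ) : ν {u} = ν (Iic u) - ν (Iio u) := by
  have h : ({u} : Set ℝ) = Iic u \ Iio u := by
    ext z; simp [mem_diff, le_antisymm_iff, and_comm]
  rw [h, measure_diff Iio_subset_Iic_self measurableSet_Iio.nullMeasurableSet (measure_ne_top ν _)]

lemma meas_atom : Measurable fun u => ν {u} := by
  have h1 : Measurable fun u => ν (Iic u) := by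
    have h : Monotone fun u => ν (Iic u) := fun a b hab => measure_mono (Iic_subset_Iic.2 hab)
    exact h.measurable
  have h2 : Measurable fun u => ν (Iio u) := by
    have h : Monotone fun u => ν (Iio u) := fun a b hab => measure_mono (Iio_subset_Iio hab)
    exact h.measurable
  simpa [atom_eq] using (show Measurable fun u => ν (Iic u) - ν (Iio u) from h1.sub h2)

lemma null_E : ν {u | ν (Ici u) = 0} = 0 := by
  set E := {u | ν (Ici u) = 0} with hE
  rcases eq_empty_or_nonempty E with h | h
  · simp [h]
  have hup : ∀ ⦃a b : ℝ⦄, a ∈ E → a ≤ b → b ∈ E := fun a b ha hab =>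
    measure_mono_null (Ici_subset_Ici.2 hab) ha
  obtain ⟨n, hn⟩ : ∃ n : ℕ, ν (Ici (-(n : ℝ))) ≠ 0 := by
    by_contra hc
    push_neg at hc
    have h0 : ν (⋃ n : ℕ, Ici (-(n : ℝ))) = 0 := measure_iUnion_null hc
    have huniv : (⋃ n : ℕ, Ici (-(n : ℝ))) = univ := by
      ext z
      simp only [mem_iUnion, mem_Ici, mem_univ, iff_true]
      obtain ⟨n, hn⟩ := exists_nat_ge (-z)
      exact ⟨n, by linarith⟩
    rw [huniv, measure_univ] at h0
    exact one_ne_zero h0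
  have hbdd : BddBelow E := by
    refine ⟨-(n : ℝ), fun u hu => ?_⟩
    by_contra hlt
    push_neg at hlt
    exact hn (hup hu hlt.le)
  set t := sInf E with ht
  have hIoi : ν (Ioi t) = 0 := by
    have hsub : Ioi t ⊆ ⋃ q : ℚ, ⋃ (_ : (q : ℝ) ∈ E), Ici (q : ℝ) := by
      intro z hz
      obtain ⟨e, he, hez⟩ := (csInf_lt_iff hbdd h).mp hz
      obtain ⟨q, hq1, hq2⟩ := exists_rat_btwn hez
      exact mem_iUnion.2 ⟨q, mem_iUnion.2 ⟨hup he hq1.le, hq2.le⟩⟩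
    exact measure_mono_null hsub
      (measure_iUnion_null fun q => measure_iUnion_null fun hq => hq)
  have hsing : ν ({t} ∩ E) = 0 := by
    by_cases htE : t ∈ E
    · refine measure_mono_null (t := Ici t) ?_ (by exact htE)
      rintro z ⟨hz1, -⟩
      exact le_of_eq (mem_singleton_iff.mp hz1).symm
    · have : ({t} ∩ E : Set ℝ) = ∅ := by
        ext z
        simp only [mem_inter_iff, mem_singleton_iff, mem_empty_iff_false, iff_false, not_and]
        rintro rfl hz; exact htE hz
      simp [this]
  have hsub2 : E ⊆ ({t} ∩ E) ∪ Ioi t := by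
    intro z hz
    rcases eq_or_lt_of_le (csInf_le hbdd hz) with h' | h'
    · exact Or.inl ⟨h'.symm, hz⟩
    · exact Or.inr h'
  refine measure_mono_null hsub2 ?_
  exact le_antisymm ((measure_union_le _ _).trans (by simp [hsing, hIoi])) zero_le

lemma ae_ne : ∀ᵐ u ∂ν, ν (Ici u) ≠ 0 := by
  rw [ae_iff]; simpa using null_E ν

lemma ae_sg_mul : ∀ᵐ u ∂ν, sg ν u * ν (Ici u) = 1 := by
  filter_upwards [ae_ne ν] with u hu
  exact ENNReal.inv_mul_cancel hu (measure_ne_top ν _)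

lemma ae_sg_ne_top : ∀ᵐ u ∂ν, sg ν u ≠ ∞ := by
  filter_upwards [ae_ne ν] with u hu
  simp [sg, hu]

lemma tonelli' {α : Type*} [MeasurableSpace α] (ρ : Measure ℝ) [SFinite ρ]
    (m : Measure α) [SFinite m]
    {g : α → ℝ≥0∞} {h : α → ℝ} (hg : Measurable g) (hh : Measurable h) :
    ∫⁻ t, ∫⁻ a, {p : ℝ × α | h p.2 ≤ p.1}.indicator (fun p => g p.2) (t, a) ∂m ∂ρ
      = ∫⁻ a, g a * ρ (Ici (h a)) ∂m := by
  have hm : AEMeasurable (Function.uncurry fun (t : ℝ) (a : α) =>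
      {p : ℝ × α | h p.2 ≤ p.1}.indicator (fun p => g p.2) (t, a)) (ρ.prod m) := by
    have heq : (Function.uncurry fun (t : ℝ) (a : α) =>
        {p : ℝ × α | h p.2 ≤ p.1}.indicator (fun p => g p.2) (t, a))
        = {p : ℝ × α | h p.2 ≤ p.1}.indicator (fun p => g p.2) := rfl
    rw [heq]
    exact ((hg.comp measurable_snd).indicator
      (measurableSet_le (hh.comp measurable_snd) measurable_fst)).aemeasurable
  rw [lintegral_lintegral_swap hm]
  refine lintegral_congr fun a => ?_
  have heq : (fun t => ({p : ℝ × α | h p.2 ≤ p.1}.indicator (fun p => g p.2) (t, a)))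
      = (Ici (h a)).indicator (fun _ => g a) := by
    funext t
    by_cases hta : h a ≤ t <;> simp [indicator_apply, hta, mem_Ici]
  rw [heq, lintegral_indicator measurableSet_Ici, setLIntegral_const]

variable (x y : ℝ)

noncomputable def Hl (t : ℝ) : ℝ≥0∞ := ∫⁻ u in Ioc x y, (Iic t).indicator (sg ν) u ∂ν

noncomputable def Gl (t : ℝ) : ℝ≥0∞ :=
  ∫⁻ u in Ioc x y, (Iic t).indicator (fun u => ν (Ioi u) * sg ν u ^ 2) u ∂ν

noncomputable def Kk : ℝ≥0∞ := ∫⁻ u in Ioc x y, sg ν u * ν (Ioc u y) ∂ν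
noncomputable def Dd : ℝ≥0∞ := ∫⁻ u in Ioc x y, sg ν u * ν {u} ∂ν
noncomputable def Ee : ℝ≥0∞ := ∫⁻ u in Ioc x y, sg ν u * ν (Ioi y) ∂ν

lemma meas_Hl : Measurable (Hl ν x y) := by
  have h : Monotone (Hl ν x y) := fun a b hab => lintegral_mono fun u =>
    indicator_le_indicator_of_subset (Iic_subset_Iic.2 hab) (fun _ => zero_le) u
  exact h.measurable

lemma meas_Gl : Measurable (Gl ν x y) := by
  have h : Monotone (Gl ν x y) := fun a b hab => lintegral_mono fun u =>
    indicator_le_indicator_of_subset (Iic_subset_Iic.2 hab) (fun _ => zero_le) u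
  exact h.measurable

lemma ind_eq (g : ℝ → ℝ≥0∞) (t u : ℝ) :
    (Iic t).indicator g u = {p : ℝ × ℝ | p.2 ≤ p.1}.indicator (fun p => g p.2) (t, u) := by
  by_cases h : u ≤ t <;> simp [indicator_apply, h, mem_Iic]

lemma decomp_Ici {u : ℝ} (hu : u ≤ y) : ν {u} + ν (Ioc u y) + ν (Ioi y) = ν (Ici u) := by
  have hIcc : ({u} : Set ℝ) ∪ Ioc u y = Icc u y := by
    ext z
    simp only [mem_union, mem_singleton_iff, mem_Ioc, mem_Icc]
    constructor
    · rintro (rfl | ⟨h1, h2⟩)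
      · exact ⟨le_refl _, hu⟩
      · exact ⟨h1.le, h2⟩
    · rintro ⟨h1, h2⟩
      rcases eq_or_lt_of_le h1 with h | h
      · exact Or.inl h.symm
      · exact Or.inr ⟨h, h2⟩
  have hd1 : Disjoint ({u} : Set ℝ) (Ioc u y) :=
    disjoint_singleton_left.mpr (fun h => lt_irrefl u h.1)
  have hd2 : Disjoint (Icc u y) (Ioi y) :=
    disjoint_left.mpr fun z hz hz' => absurd hz.2 (not_le.mpr hz')
  rw [← measure_union hd1 measurableSet_Ioc, hIcc,
    ← measure_union hd2 measurableSet_Ioi, Icc_union_Ioi_eq_Ici hu]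

lemma sum3 (hxy : x ≤ y) : Kk ν x y + Dd ν x y + Ee ν x y = ν (Ioc x y) := by
  have hmeas1 : Measurable fun u => sg ν u * ν (Ioc u y) := (meas_sg ν).mul (meas_qo ν y)
  have hmeas2 : Measurable fun u => sg ν u * ν {u} := (meas_sg ν).mul (meas_atom ν)
  calc Kk ν x y + Dd ν x y + Ee ν x y
      = ∫⁻ u in Ioc x y,
          (sg ν u * ν (Ioc u y) + sg ν u * ν {u} + sg ν u * ν (Ioi y)) ∂ν := by
        rw [lintegral_add_left (f := fun u => sg ν u * ν (Ioc u y) + sg ν u * ν {u}) (hmeas1.add hmeas2), lintegral_add_left hmeas1]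
        rfl
    _ = ∫⁻ u in Ioc x y, 1 ∂ν := by
        refine lintegral_congr_ae ?_
        filter_upwards [ae_restrict_of_ae (ae_sg_mul ν), ae_restrict_mem measurableSet_Ioc]
          with u h1 h2
        rw [← mul_add, ← mul_add, add_comm (ν (Ioc u y)) (ν {u}), decomp_Ici ν y h2.2, h1]
    _ = ν (Ioc x y) := setLIntegral_one _

lemma inner_Ici (hxy : x ≤ y) :
    ∫⁻ u in Ioc x y, sg ν u * (ν.restrict (Ioc x y)) (Ici u) ∂ν
      = Kk ν x y + Dd ν x y := by
  have hcong : ∀ᵐ u ∂(ν.restrict (Ioc x y)), sg ν u * (ν.restrict (Ioc x y)) (Ici u)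
      = sg ν u * ν (Ioc u y) + sg ν u * ν {u} := by
    filter_upwards [ae_restrict_mem measurableSet_Ioc] with u hu
    rw [Measure.restrict_apply measurableSet_Ici]
    have hset : Ici u ∩ Ioc x y = {u} ∪ Ioc u y := by
      ext z
      simp only [mem_inter_iff, mem_Ici, mem_Ioc, mem_union, mem_singleton_iff]
      constructor
      · rintro ⟨h1, _, h3⟩
        rcases eq_or_lt_of_le h1 with h | h
        · exact Or.inl h.symm
        · exact Or.inr ⟨h, h3⟩
      · rintro (rfl | ⟨h1, h2⟩)
        · exact ⟨le_refl _, hu.1, hu.2⟩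
        · exact ⟨h1.le, hu.1.trans h1, h2⟩
    have hd1 : Disjoint ({u} : Set ℝ) (Ioc u y) :=
      disjoint_singleton_left.mpr (fun h => lt_irrefl u h.1)
    rw [hset, measure_union hd1 measurableSet_Ioc, mul_add, add_comm]
  rw [lintegral_congr_ae hcong,
    lintegral_add_left (f := fun u => sg ν u * ν (Ioc u y)) ((meas_sg ν).mul (meas_qo ν y))]
  rfl

lemma EH_aux (ρ : Measure ℝ) [SFinite ρ] :
    ∫⁻ t, Hl ν x y t ∂ρ = ∫⁻ u in Ioc x y, sg ν u * ρ (Ici u) ∂ν := by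
  simp only [Hl, ind_eq]
  exact tonelli' ρ (ν.restrict (Ioc x y)) (meas_sg ν) measurable_id

lemma EH : ∫⁻ t, Hl ν x y t ∂ν = ν (Ioc x y) := by
  rw [EH_aux, ← setLIntegral_one]
  refine lintegral_congr_ae ?_
  filter_upwards [ae_restrict_of_ae (ae_sg_mul ν)] with u h1
  exact h1

lemma EAB (hxy : x ≤ y) :
    ∫⁻ t in Ioc x y, Hl ν x y t ∂ν = Kk ν x y + Dd ν x y :=
  (EH_aux ν x y (ν.restrict (Ioc x y))).trans (inner_Ici ν x y hxy)

lemma EG (hxy : x ≤ y) : ∫⁻ t, Gl ν x y t ∂ν = Kk ν x y + Ee ν x y := by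
  have hgmeas : Measurable fun u => ν (Ioi u) * sg ν u ^ 2 :=
    (meas_qoi ν).mul ((meas_sg ν).pow_const 2)
  have h1 : ∫⁻ t, Gl ν x y t ∂ν
      = ∫⁻ u in Ioc x y, (ν (Ioi u) * sg ν u ^ 2) * ν (Ici u) ∂ν := by
    simp only [Gl, ind_eq]
    exact tonelli' ν (ν.restrict (Ioc x y)) hgmeas measurable_id
  rw [h1]
  calc ∫⁻ u in Ioc x y, (ν (Ioi u) * sg ν u ^ 2) * ν (Ici u) ∂ν
      = ∫⁻ u in Ioc x y, (sg ν u * ν (Ioc u y) + sg ν u * ν (Ioi y)) ∂ν := by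
        refine lintegral_congr_ae ?_
        filter_upwards [ae_restrict_of_ae (ae_sg_mul ν), ae_restrict_mem measurableSet_Ioc]
          with u h1 h2
        have e1 : (ν (Ioi u) * sg ν u ^ 2) * ν (Ici u)
            = (ν (Ioi u)) * sg ν u * (sg ν u * ν (Ici u)) := by ring
        have hu2 : ν (Ioi u) = ν (Ioc u y) + ν (Ioi y) := by
          rw [← Ioc_union_Ioi_eq_Ioi h2.2]
          exact measure_union
            (disjoint_left.mpr fun z hz hz' => absurd hz.2 (not_le.mpr hz'))
            measurableSet_Ioi
        rw [e1, h1, mul_one, mul_comm (ν (Ioi u)) (sg ν u), hu2, mul_add]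
    _ = Kk ν x y + Ee ν x y := by
        rw [lintegral_add_left (f := fun u => sg ν u * ν (Ioc u y)) ((meas_sg ν).mul (meas_qo ν y))]
        rfl

lemma EB2 (hxy : x ≤ y) :
    ∫⁻ t, (Hl ν x y t) ^ 2 ∂ν = Kk ν x y + (Kk ν x y + Dd ν x y) := by
  set m := ν.restrict (Ioc x y) with hm
  have hfmeas : ∀ t : ℝ, Measurable fun u => (Iic t).indicator (sg ν) u := fun t =>
    (meas_sg ν).indicator measurableSet_Iic
  have hsq : ∀ t, (Hl ν x y t) ^ 2
      = ∫⁻ w, (Iic t).indicator (sg ν) w.1 * (Iic t).indicator (sg ν) w.2 ∂(m.prod m) := by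
    intro t
    have hpm : Measurable fun w : ℝ × ℝ =>
        (Iic t).indicator (sg ν) w.1 * (Iic t).indicator (sg ν) w.2 :=
      ((hfmeas t).comp measurable_fst).mul ((hfmeas t).comp measurable_snd)
    rw [lintegral_prod _ hpm.aemeasurable]
    have h2 : ∀ u : ℝ, (Iic t).indicator (sg ν) u * Hl ν x y t
        = ∫⁻ v, (Iic t).indicator (sg ν) u * (Iic t).indicator (sg ν) v ∂m :=
      fun u => (lintegral_const_mul _ (hfmeas t)).symm
    rw [sq]
    calc Hl ν x y t * Hl ν x y t
        = ∫⁻ u, (Iic t).indicator (sg ν) u * Hl ν x y t ∂m := by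
          rw [lintegral_mul_const _ (hfmeas t)]; rfl
      _ = _ := lintegral_congr fun u => h2 u
  have hker : ∀ (t : ℝ) (w : ℝ × ℝ),
      (Iic t).indicator (sg ν) w.1 * (Iic t).indicator (sg ν) w.2
      = {p : ℝ × (ℝ × ℝ) | p.2.1 ⊔ p.2.2 ≤ p.1}.indicator
          (fun p => sg ν p.2.1 * sg ν p.2.2) (t, w) := by
    intro t w
    by_cases h1 : w.1 ≤ t <;> by_cases h2 : w.2 ≤ t <;>
      simp [indicator_apply, h1, h2, sup_le_iff, mem_Iic]
  have hton : ∫⁻ t, (Hl ν x y t) ^ 2 ∂ν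
      = ∫⁻ w, (sg ν w.1 * sg ν w.2) * ν (Ici (w.1 ⊔ w.2)) ∂(m.prod m) := by
    simp only [hsq, hker]
    exact tonelli' ν (m.prod m)
      (((meas_sg ν).comp measurable_fst).mul ((meas_sg ν).comp measurable_snd))
      (measurable_fst.sup measurable_snd)
  rw [hton]
  have hpt : ∀ w : ℝ × ℝ, ν (Ici (w.1 ⊔ w.2)) ≠ 0 →
      (sg ν w.1 * sg ν w.2) * ν (Ici (w.1 ⊔ w.2)) = sg ν (w.1 ⊓ w.2) := by
    rintro ⟨u, v⟩ hw
    rcases le_total u v with h | h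
    · simp only [sup_eq_right.mpr h] at hw ⊢
      rw [inf_eq_left.mpr h, mul_assoc]
      have : sg ν v * ν (Ici v) = 1 := ENNReal.inv_mul_cancel hw (measure_ne_top ν _)
      rw [this, mul_one]
    · simp only [sup_eq_left.mpr h] at hw ⊢
      rw [inf_eq_right.mpr h, mul_comm (sg ν u) (sg ν v), mul_assoc]
      have : sg ν u * ν (Ici u) = 1 := ENNReal.inv_mul_cancel hw (measure_ne_top ν _)
      rw [this, mul_one]
  have hnull : (m.prod m) {w : ℝ × ℝ | ν (Ici (w.1 ⊔ w.2)) = 0} = 0 := by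
    have hsub : {w : ℝ × ℝ | ν (Ici (w.1 ⊔ w.2)) = 0}
        ⊆ ({u | ν (Ici u) = 0} ×ˢ univ) ∪ (univ ×ˢ {u | ν (Ici u) = 0}) := by
      intro w hw
      rcases le_total w.1 w.2 with h | h
      · exact Or.inr ⟨trivial, by simpa [sup_eq_right.mpr h] using hw⟩
      · exact Or.inl ⟨by simpa [sup_eq_left.mpr h] using hw, trivial⟩
    have hE : m {u | ν (Ici u) = 0} = 0 :=
      le_antisymm (le_trans (Measure.restrict_le_self _) (le_of_eq (null_E ν))) zero_le
    refine measure_mono_null hsub (le_antisymm (le_trans (measure_union_le _ _) ?_) zero_le)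
    rw [Measure.prod_prod, Measure.prod_prod, hE]
    simp
  have hae : ∀ᵐ w ∂(m.prod m),
      (sg ν w.1 * sg ν w.2) * ν (Ici (w.1 ⊔ w.2)) = sg ν (w.1 ⊓ w.2) := by
    rw [ae_iff]
    refine measure_mono_null (fun w hw => ?_) hnull
    by_contra hne
    exact hw (hpt w hne)
  have hinfm : Measurable fun w : ℝ × ℝ => sg ν (w.1 ⊓ w.2) :=
    (meas_sg ν).comp (measurable_fst.inf measurable_snd)
  rw [lintegral_congr_ae hae, lintegral_prod _ hinfm.aemeasurable]
  have hinner : ∀ u : ℝ, ∫⁻ v, sg ν (u ⊓ v) ∂m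
      = (∫⁻ v in Iio u, sg ν v ∂m) + sg ν u * m (Ici u) := by
    intro u
    rw [← lintegral_add_compl (fun v => sg ν (u ⊓ v)) measurableSet_Iio, compl_Iio]
    congr 1
    · refine setLIntegral_congr_fun measurableSet_Iio (fun v hv => ?_)
      simp only [min_eq_right (le_of_lt (Set.mem_Iio.mp hv))]
    · have h3 : ∫⁻ v in Ici u, sg ν (u ⊓ v) ∂m = ∫⁻ v in Ici u, sg ν u ∂m :=
        setLIntegral_congr_fun measurableSet_Ici
          (fun v hv => by simp only [min_eq_left (Set.mem_Ici.mp hv)])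
      rw [h3, setLIntegral_const]
  rw [lintegral_congr fun u => hinner u]
  have hmeas1 : Measurable fun u => ∫⁻ v in Iio u, sg ν v ∂m := by
    have h : Monotone fun u => ∫⁻ v in Iio u, sg ν v ∂m := fun a b hab =>
      lintegral_mono_set (Iio_subset_Iio hab)
    exact h.measurable
  rw [lintegral_add_left hmeas1]
  have hT2 : ∫⁻ u, sg ν u * m (Ici u) ∂m = Kk ν x y + Dd ν x y := inner_Ici ν x y hxy
  have hT1 : ∫⁻ u, (∫⁻ v in Iio u, sg ν v ∂m) ∂m = Kk ν x y := by
    have hker2 : ∀ u v : ℝ, (Iio u).indicator (sg ν) v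
        = {p : ℝ × ℝ | p.2 < p.1}.indicator (fun p => sg ν p.2) (u, v) := by
      intro u v; by_cases h : v < u <;> simp [indicator_apply, h, mem_Iio]
    have hstep : ∀ u : ℝ, ∫⁻ v in Iio u, sg ν v ∂m
        = ∫⁻ v, {p : ℝ × ℝ | p.2 < p.1}.indicator (fun p => sg ν p.2) (u, v) ∂m := by
      intro u
      rw [← lintegral_indicator measurableSet_Iio]
      exact lintegral_congr fun v => hker2 u v
    rw [lintegral_congr fun u => hstep u]
    have hswapm : AEMeasurable (Function.uncurry fun (u v : ℝ) =>
        {p : ℝ × ℝ | p.2 < p.1}.indicator (fun p => sg ν p.2) (u, v)) (m.prod m) := by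
      have heq : (Function.uncurry fun (u v : ℝ) =>
          {p : ℝ × ℝ | p.2 < p.1}.indicator (fun p => sg ν p.2) (u, v))
          = {p : ℝ × ℝ | p.2 < p.1}.indicator (fun p => sg ν p.2) := rfl
      rw [heq]
      exact (((meas_sg ν).comp measurable_snd).indicator
        (measurableSet_lt measurable_snd measurable_fst)).aemeasurable
    rw [lintegral_lintegral_swap hswapm]
    have hin : ∀ v : ℝ, (∫⁻ u, {p : ℝ × ℝ | p.2 < p.1}.indicator
        (fun p => sg ν p.2) (u, v) ∂m) = sg ν v * m (Ioi v) := by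
      intro v
      have heq : (fun u => {p : ℝ × ℝ | p.2 < p.1}.indicator (fun p => sg ν p.2) (u, v))
          = (Ioi v).indicator (fun _ => sg ν v) := by
        funext u; by_cases h : v < u <;> simp [indicator_apply, h, mem_Ioi]
      rw [heq, lintegral_indicator measurableSet_Ioi, setLIntegral_const]
    rw [lintegral_congr fun v => hin v]
    refine lintegral_congr_ae ?_
    filter_upwards [ae_restrict_mem measurableSet_Ioc] with v hv
    rw [hm, Measure.restrict_apply measurableSet_Ioi]
    have hset : Ioi v ∩ Ioc x y = Ioc v y := by
      ext z
      simp only [mem_inter_iff, mem_Ioi, mem_Ioc]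
      exact ⟨fun ⟨h1, h2⟩ => ⟨h1, h2.2⟩, fun ⟨h1, h2⟩ => ⟨h1, hv.1.trans h1, h2⟩⟩
    rw [hset]
  rw [hT1, hT2]

lemma s_eq (u : ℝ) : (1 - (ν (Iio u)).toReal)⁻¹ = (sg ν u).toReal := by
  have h1 : ν (Ici u) = 1 - ν (Iio u) := by
    rw [← prob_compl_eq_one_sub measurableSet_Iio, compl_Iio]
  have h2 : (ν (Ici u)).toReal = 1 - (ν (Iio u)).toReal := by
    rw [h1, ENNReal.toReal_sub_of_le prob_le_one ENNReal.one_ne_top, ENNReal.toReal_one]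
  rw [sg, ENNReal.toReal_inv, h2]

lemma oneF_eq (u : ℝ) : 1 - (ν (Iic u)).toReal = (ν (Ioi u)).toReal := by
  have h1 : ν (Ioi u) = 1 - ν (Iic u) := by
    rw [← prob_compl_eq_one_sub measurableSet_Iic, compl_Iic]
  rw [h1, ENNReal.toReal_sub_of_le prob_le_one ENNReal.one_ne_top, ENNReal.toReal_one]

lemma H_eq (t : ℝ) :
    ∫ u in Ioc x y, (if u ≤ t then (1 - (ν (Iio u)).toReal)⁻¹ else 0) ∂ν
      = (Hl ν x y t).toReal := by
  have hae : ∀ᵐ u ∂(ν.restrict (Ioc x y)), (Iic t).indicator (sg ν) u < ∞ := by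
    filter_upwards [ae_restrict_of_ae (ae_sg_ne_top ν)] with u hu
    exact lt_of_le_of_lt (indicator_le_self _ _ u) (lt_top_iff_ne_top.mpr hu)
  have h1 := integral_toReal ((meas_sg ν).indicator measurableSet_Iic).aemeasurable hae
  rw [show (Hl ν x y t) = ∫⁻ u in Ioc x y, (Iic t).indicator (sg ν) u ∂ν from rfl, ← h1]
  refine integral_congr_ae (ae_of_all _ fun u => ?_)
  by_cases h : u ≤ t <;> simp [indicator_apply, h, mem_Iic, s_eq]

lemma G_eq (t : ℝ) :
    ∫ u in Ioc x y, (if u ≤ t then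
        (1 - (ν (Iic u)).toReal) * ((1 - (ν (Iio u)).toReal)⁻¹) ^ 2 else 0) ∂ν
      = (Gl ν x y t).toReal := by
  have hgm : Measurable fun u => ν (Ioi u) * sg ν u ^ 2 :=
    (meas_qoi ν).mul ((meas_sg ν).pow_const 2)
  have hae : ∀ᵐ u ∂(ν.restrict (Ioc x y)),
      (Iic t).indicator (fun u => ν (Ioi u) * sg ν u ^ 2) u < ∞ := by
    filter_upwards [ae_restrict_of_ae (ae_sg_ne_top ν)] with u hu
    refine lt_of_le_of_lt (indicator_le_self _ _ u) ?_
    exact ENNReal.mul_lt_top (measure_lt_top ν _) (ENNReal.pow_lt_top hu.lt_top)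
  have h1 := integral_toReal (hgm.indicator measurableSet_Iic).aemeasurable hae
  rw [show (Gl ν x y t) = ∫⁻ u in Ioc x y,
      (Iic t).indicator (fun u => ν (Ioi u) * sg ν u ^ 2) u ∂ν from rfl, ← h1]
  refine integral_congr_ae (ae_of_all _ fun u => ?_)
  by_cases h : u ≤ t <;>
    simp [indicator_apply, h, mem_Iic, s_eq, oneF_eq, ENNReal.toReal_mul, ENNReal.toReal_pow]

lemma core (hxy : x ≤ y) :
    Integrable (fun t => ((if x < t ∧ t ≤ y then (1 : ℝ) else 0)
        - (Hl ν x y t).toReal) ^ 2) ν ∧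
    Integrable (fun t => (Gl ν x y t).toReal) ν ∧
    ∫ t, ((if x < t ∧ t ≤ y then (1 : ℝ) else 0) - (Hl ν x y t).toReal) ^ 2 ∂ν
      = ∫ t, (Gl ν x y t).toReal ∂ν := by
  have hsum := sum3 ν x y hxy
  have hS : ν (Ioc x y) ≠ ∞ := measure_ne_top ν _
  have hK : Kk ν x y ≠ ∞ :=
    ne_top_of_le_ne_top hS (hsum ▸ le_self_add.trans le_self_add)
  have hD : Dd ν x y ≠ ∞ :=
    ne_top_of_le_ne_top hS (hsum ▸ le_add_self.trans le_self_add)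
  have hE : Ee ν x y ≠ ∞ := ne_top_of_le_ne_top hS (hsum ▸ le_add_self)
  have hKD : Kk ν x y + Dd ν x y ≠ ∞ := ENNReal.add_ne_top.mpr ⟨hK, hD⟩
  have hHlae : ∀ᵐ t ∂ν, Hl ν x y t < ∞ :=
    ae_lt_top (meas_Hl ν x y) (by rw [EH]; exact hS)
  set Hr := fun t => (Hl ν x y t).toReal with hHr
  set indR := fun t : ℝ => if x < t ∧ t ≤ y then (1 : ℝ) else 0 with hindR
  have hind_eq : indR = (Ioc x y).indicator (fun _ => (1 : ℝ)) := by
    funext t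
    by_cases h : x < t ∧ t ≤ y <;> simp [indicator_apply, mem_Ioc, h, hindR]
  have hind_int : Integrable indR ν := by
    rw [hind_eq]; exact (integrable_const 1).indicator measurableSet_Ioc
  have hHr_int : Integrable Hr ν :=
    integrable_toReal_of_lintegral_ne_top (meas_Hl ν x y).aemeasurable (by rw [EH]; exact hS)
  have hH2_eq : (fun t => Hr t ^ 2) = fun t => ((Hl ν x y t) ^ 2).toReal :=
    funext fun t => (ENNReal.toReal_pow _ 2).symm
  have hH2_int : Integrable (fun t => Hr t ^ 2) ν := by
    rw [hH2_eq]
    exact integrable_toReal_of_lintegral_ne_top ((meas_Hl ν x y).pow_const 2).aemeasurable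
      (by rw [EB2 ν x y hxy]; exact ENNReal.add_ne_top.mpr ⟨hK, hKD⟩)
  have hGr_int : Integrable (fun t => (Gl ν x y t).toReal) ν :=
    integrable_toReal_of_lintegral_ne_top (meas_Gl ν x y).aemeasurable
      (by rw [EG ν x y hxy]; exact ENNReal.add_ne_top.mpr ⟨hK, hE⟩)
  have hindH_eq : (fun t => indR t * Hr t) = (Ioc x y).indicator Hr := by
    funext t
    by_cases h : x < t ∧ t ≤ y <;> simp [indicator_apply, mem_Ioc, h, hindR]
  have hindH_int : Integrable (fun t => indR t * Hr t) ν := by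
    rw [hindH_eq]; exact hHr_int.indicator measurableSet_Ioc
  have hexp : ∀ t, (indR t - Hr t) ^ 2 = indR t - 2 * (indR t * Hr t) + Hr t ^ 2 := by
    intro t
    by_cases h : x < t ∧ t ≤ y <;> simp [hindR, h] <;> ring
  have hint2 : Integrable (fun t => 2 * (indR t * Hr t)) ν := hindH_int.const_mul 2
  have hsubint : Integrable (fun t => indR t - 2 * (indR t * Hr t)) ν := hind_int.sub hint2
  have hLHS_int : Integrable (fun t => (indR t - Hr t) ^ 2) ν := by
    refine (Integrable.add hsubint hH2_int).congr ?_
    exact ae_of_all _ fun t => (hexp t).symm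
  refine ⟨hLHS_int, hGr_int, ?_⟩
  have I1 : ∫ t, indR t ∂ν = (ν (Ioc x y)).toReal := by
    rw [hind_eq, integral_indicator measurableSet_Ioc, setIntegral_const, smul_eq_mul, mul_one, Measure.real]
  have I2 : ∫ t, indR t * Hr t ∂ν = (Kk ν x y + Dd ν x y).toReal := by
    rw [hindH_eq, integral_indicator measurableSet_Ioc, hHr,
      integral_toReal ((meas_Hl ν x y).aemeasurable.restrict) (ae_restrict_of_ae hHlae),
      EAB ν x y hxy]
  have I3 : ∫ t, Hr t ^ 2 ∂ν = (Kk ν x y + (Kk ν x y + Dd ν x y)).toReal := by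
    rw [hH2_eq, integral_toReal ((meas_Hl ν x y).pow_const 2).aemeasurable
      (hHlae.mono fun t ht => ENNReal.pow_lt_top ht), EB2 ν x y hxy]
  have I4 : ∫ t, (Gl ν x y t).toReal ∂ν = (Kk ν x y + Ee ν x y).toReal := by
    rw [integral_toReal (meas_Gl ν x y).aemeasurable
      (ae_lt_top (meas_Gl ν x y) (by rw [EG ν x y hxy]; exact ENNReal.add_ne_top.mpr ⟨hK, hE⟩)),
      EG ν x y hxy]
  have hstep : ∫ t, (indR t - Hr t) ^ 2 ∂ν
      = ∫ t, indR t ∂ν - 2 * ∫ t, indR t * Hr t ∂ν + ∫ t, Hr t ^ 2 ∂ν := by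
    rw [integral_congr_ae (ae_of_all _ hexp), integral_add hsubint hH2_int,
      integral_sub hind_int hint2, MeasureTheory.integral_const_mul]
  rw [hstep, I1, I2, I3, I4]
  have e0 : (ν (Ioc x y)).toReal = (Kk ν x y).toReal + (Dd ν x y).toReal + (Ee ν x y).toReal := by
    rw [← hsum, ENNReal.toReal_add hKD hE, ENNReal.toReal_add hK hD]
  rw [e0, ENNReal.toReal_add hK hD, ENNReal.toReal_add hK hKD,
    ENNReal.toReal_add hK hD, ENNReal.toReal_add hK hE]
  ring

end CompSM

/-- The second-moment identity for the compensated indicator of a nonnegative random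
variable: the expectation of the square of
`1{x < ξ ≤ y} - ∫_{(x,y]} 1{u ≤ ξ} (1 - F(u-))⁻¹ dF(u)` equals the expectation of
`∫_{(x,y]} 1{u ≤ ξ} (1 - F(u)) (1 - F(u-))⁻² dF(u)`, and both sides are finite.
Here `dF` is the Lebesgue–Stieltjes measure of `F`, i.e. the law `μ.map ξ` of `ξ`,
`F u = P(ξ ≤ u)`, `F(u-) = P(ξ < u)`, and the integrands vanish on `{u : F(u-) = 1}`
(in Lean this is automatic since `(1 - 1)⁻¹ = 0⁻¹ = 0`). -/
theorem compensator_secondMoment_eq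
    {Ω : Type*} [MeasurableSpace Ω] (μ : Measure Ω) [IsProbabilityMeasure μ]
    (ξ : Ω → ℝ) (hξm : Measurable ξ) (hξ0 : ∀ ω, 0 ≤ ξ ω)
    (x y : ℝ) (hx : 0 ≤ x) (hxy : x ≤ y) :
    Integrable (fun ω =>
      ((if x < ξ ω ∧ ξ ω ≤ y then (1 : ℝ) else 0)
        - ∫ u in Set.Ioc x y,
            (if u ≤ ξ ω then (1 - (μ {ω' | ξ ω' < u}).toReal)⁻¹ else 0)
          ∂(μ.map ξ)) ^ 2) μ ∧
    Integrable (fun ω =>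
      ∫ u in Set.Ioc x y,
        (if u ≤ ξ ω then
            (1 - (μ {ω' | ξ ω' ≤ u}).toReal) * ((1 - (μ {ω' | ξ ω' < u}).toReal)⁻¹) ^ 2
          else 0) ∂(μ.map ξ)) μ ∧
    (∫ ω, ((if x < ξ ω ∧ ξ ω ≤ y then (1 : ℝ) else 0)
        - ∫ u in Set.Ioc x y,
            (if u ≤ ξ ω then (1 - (μ {ω' | ξ ω' < u}).toReal)⁻¹ else 0)
          ∂(μ.map ξ)) ^ 2 ∂μ)
      = ∫ ω, (∫ u in Set.Ioc x y,
          (if u ≤ ξ ω then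
              (1 - (μ {ω' | ξ ω' ≤ u}).toReal) * ((1 - (μ {ω' | ξ ω' < u}).toReal)⁻¹) ^ 2
            else 0) ∂(μ.map ξ)) ∂μ := by
  classical
  set ν := μ.map ξ with hν
  haveI : IsProbabilityMeasure ν := Measure.isProbabilityMeasure_map hξm.aemeasurable
  have hIio : ∀ u : ℝ, μ {ω' | ξ ω' < u} = ν (Iio u) := by
    intro u
    rw [hν, MeasureTheory.Measure.map_apply hξm measurableSet_Iio]
    rfl
  have hIic : ∀ u : ℝ, μ {ω' | ξ ω' ≤ u} = ν (Iic u) := by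
    intro u
    rw [hν, MeasureTheory.Measure.map_apply hξm measurableSet_Iic]
    rfl
  set gL := fun t : ℝ => ((if x < t ∧ t ≤ y then (1 : ℝ) else 0)
      - (CompSM.Hl ν x y t).toReal) ^ 2 with hgL
  set gR := fun t : ℝ => (CompSM.Gl ν x y t).toReal with hgR
  have hLfun : (fun ω => ((if x < ξ ω ∧ ξ ω ≤ y then (1 : ℝ) else 0)
      - ∫ u in Set.Ioc x y,
          (if u ≤ ξ ω then (1 - (μ {ω' | ξ ω' < u}).toReal)⁻¹ else 0) ∂ν) ^ 2)
      = fun ω => gL (ξ ω) := by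
    funext ω
    simp only [hgL, hIio]
    rw [CompSM.H_eq ν x y (ξ ω)]
  have hRfun : (fun ω => ∫ u in Set.Ioc x y,
      (if u ≤ ξ ω then
          (1 - (μ {ω' | ξ ω' ≤ u}).toReal) * ((1 - (μ {ω' | ξ ω' < u}).toReal)⁻¹) ^ 2
        else 0) ∂ν)
      = fun ω => gR (ξ ω) := by
    funext ω
    simp only [hgR, hIio, hIic]
    rw [CompSM.G_eq ν x y (ξ ω)]
  obtain ⟨h1, h2, h3⟩ := CompSM.core ν x y hxy
  have hmL : AEStronglyMeasurable gL ν := h1.aestronglyMeasurable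
  have hmR : AEStronglyMeasurable gR ν := h2.aestronglyMeasurable
  refine ⟨?_, ?_, ?_⟩
  · rw [hLfun]
    exact (integrable_map_measure hmL hξm.aemeasurable).mp h1
  · rw [hRfun]
    exact (integrable_map_measure hmR hξm.aemeasurable).mp h2
  · rw [hLfun, hRfun]
    calc ∫ ω, gL (ξ ω) ∂μ = ∫ t, gL t ∂ν := (integral_map hξm.aemeasurable hmL).symm
      _ = ∫ t, gR t ∂ν := h3
      _ = ∫ ω, gR (ξ ω) ∂μ := integral_map hξm.aemeasurable hmR
end

section
/- Let S and S′ be metric spaces, let S₀ be a Borel subset of S, and let fₙ and f be maps from S to S′ such that f is Borel measurable and fₙ(xₙ) → f(x) in S′ whenever xₙ → x in S with x ∈ S₀. Let Xₙ : Ω → S be arbitrary maps converging in distribution (in the Hoffmann–Jørgensen sense) to a Borel measurable map X : Ω → S all of whose values lie in S₀. Then fₙ(Xₙ) converges in distribution (in the Hoffmann–Jørgensen sense) to f(X). -/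
open MeasureTheory Filter Set Topology

/-- The outer expectation `E* ξ`: the infimum of `E ζ` over all integrable random
variables `ζ ≥ ξ` almost surely. -/
noncomputable def outerExp {Ω : Type*} [MeasurableSpace Ω] (μ : Measure Ω)
    (ξ : Ω → ℝ) : ℝ :=
  sInf {c : ℝ | ∃ ζ : Ω → ℝ, Measurable ζ ∧ Integrable ζ μ ∧
    (∀ᵐ ω ∂μ, ξ ω ≤ ζ ω) ∧ c = ∫ ω, ζ ω ∂μ}

/-- Hoffmann–Jørgensen convergence in distribution of (possibly nonmeasurable) maps
`Xₙ` to a measurable map `Y`: `E* f(Xₙ) → E f(Y)` for every bounded continuous `f`. -/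
def TendstoInDistHJ {Ω S : Type*} [MeasurableSpace Ω] [TopologicalSpace S]
    (μ : Measure Ω) (X : ℕ → Ω → S) (Y : Ω → S) : Prop :=
  ∀ f : S → ℝ, Continuous f → (∃ C : ℝ, ∀ x : S, |f x| ≤ C) →
    Tendsto (fun n => outerExp μ fun ω => f (X n ω)) atTop
      (nhds (∫ ω, f (Y ω) ∂μ))

namespace ECMAux

variable {Ω : Type*} [MeasurableSpace Ω] {μ : Measure Ω} [IsProbabilityMeasure μ]

def oE (μ : Measure Ω) (ξ : Ω → ℝ) : Set ℝ :=
  {c : ℝ | ∃ ζ : Ω → ℝ, Measurable ζ ∧ Integrable ζ μ ∧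
    (∀ᵐ ω ∂μ, ξ ω ≤ ζ ω) ∧ c = ∫ ω, ζ ω ∂μ}

lemma const_mem_oE {ξ : Ω → ℝ} {C : ℝ} (h : ∀ ω, ξ ω ≤ C) : C ∈ oE μ ξ :=
  ⟨fun _ => C, measurable_const, integrable_const C, Filter.Eventually.of_forall h, by simp⟩

lemma oE_nonempty {ξ : Ω → ℝ} {C : ℝ} (h : ∀ ω, ξ ω ≤ C) : (oE μ ξ).Nonempty :=
  ⟨C, const_mem_oE h⟩

lemma oE_bddBelow {ξ : Ω → ℝ} {c : ℝ} (h : ∀ ω, c ≤ ξ ω) : BddBelow (oE μ ξ) := by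
  refine ⟨c, fun b hb => ?_⟩
  obtain ⟨ζ, hm, hi, hle, rfl⟩ := hb
  have h1 : (∫ _ω, c ∂μ) ≤ ∫ ω, ζ ω ∂μ :=
    integral_mono_ae (integrable_const c) hi (hle.mono fun ω h2 => (h ω).trans h2)
  simpa using h1

lemma outerExp_le_integral {ξ ζ : Ω → ℝ} {c : ℝ} (hlb : ∀ ω, c ≤ ξ ω)
    (hm : Measurable ζ) (hi : Integrable ζ μ) (hae : ∀ᵐ ω ∂μ, ξ ω ≤ ζ ω) :
    outerExp μ ξ ≤ ∫ ω, ζ ω ∂μ :=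
  csInf_le (oE_bddBelow hlb) ⟨ζ, hm, hi, hae, rfl⟩

lemma le_outerExp {ξ : Ω → ℝ} {c C : ℝ} (hlb : ∀ ω, c ≤ ξ ω) (hub : ∀ ω, ξ ω ≤ C) :
    c ≤ outerExp μ ξ := by
  refine le_csInf (oE_nonempty hub) fun b hb => ?_
  obtain ⟨ζ, hm, hi, hle, rfl⟩ := hb
  have h1 : (∫ _ω, c ∂μ) ≤ ∫ ω, ζ ω ∂μ :=
    integral_mono_ae (integrable_const c) hi (hle.mono fun ω h2 => (hlb ω).trans h2)
  simpa using h1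

lemma outerExp_mono {ξ η : Ω → ℝ} {c C : ℝ} (hlb : ∀ ω, c ≤ ξ ω)
    (hub : ∀ ω, η ω ≤ C) (hle : ∀ ω, ξ ω ≤ η ω) :
    outerExp μ ξ ≤ outerExp μ η := by
  refine csInf_le_csInf (oE_bddBelow hlb) (oE_nonempty hub) ?_
  rintro b ⟨ζ, hm, hi, hae, hb⟩
  exact ⟨ζ, hm, hi, hae.mono (fun ω h2 => (hle ω).trans h2), hb⟩

lemma outerExp_const (c : ℝ) : outerExp μ (fun _ => c) = c := by
  refine le_antisymm ?_ (le_outerExp (fun _ => le_rfl) (fun _ => le_rfl))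
  have : (c : ℝ) ∈ oE μ (fun _ => c) := const_mem_oE fun _ => le_rfl
  exact csInf_le (oE_bddBelow (c := c) fun _ => le_rfl) this

lemma outerExp_add_le {ξ η : Ω → ℝ} {c₁ C₁ c₂ C₂ : ℝ}
    (h1l : ∀ ω, c₁ ≤ ξ ω) (h1u : ∀ ω, ξ ω ≤ C₁)
    (h2l : ∀ ω, c₂ ≤ η ω) (h2u : ∀ ω, η ω ≤ C₂) :
    outerExp μ (fun ω => ξ ω + η ω) ≤ outerExp μ ξ + outerExp μ η := by
  have key : ∀ a ∈ oE μ ξ, ∀ b ∈ oE μ η, outerExp μ (fun ω => ξ ω + η ω) ≤ a + b := by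
    rintro a ⟨ζ₁, hm1, hi1, hae1, rfl⟩ b ⟨ζ₂, hm2, hi2, hae2, rfl⟩
    have h := outerExp_le_integral (ξ := fun ω => ξ ω + η ω) (c := c₁ + c₂)
      (fun ω => add_le_add (h1l ω) (h2l ω)) (hm1.add hm2) (hi1.add hi2)
      ((hae1.and hae2).mono fun ω hw => add_le_add hw.1 hw.2)
    simp only [Pi.add_apply] at h
    rwa [integral_add hi1 hi2] at h
  have h1 : ∀ b ∈ oE μ η, outerExp μ (fun ω => ξ ω + η ω) - b ≤ outerExp μ ξ := by
    intro b hb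
    refine le_csInf (oE_nonempty h1u) fun a ha => ?_
    have := key a ha b hb
    linarith
  have h2 : outerExp μ (fun ω => ξ ω + η ω) - outerExp μ ξ ≤ outerExp μ η := by
    refine le_csInf (oE_nonempty h2u) fun b hb => ?_
    have := h1 b hb
    linarith
  linarith

lemma outerExp_add_const {ξ : Ω → ℝ} {c₁ C₁ : ℝ} (c : ℝ)
    (h1l : ∀ ω, c₁ ≤ ξ ω) (h1u : ∀ ω, ξ ω ≤ C₁) :
    outerExp μ (fun ω => ξ ω + c) = outerExp μ ξ + c := by
  have h1 : outerExp μ (fun ω => ξ ω + c) ≤ outerExp μ ξ + c := by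
    have := outerExp_add_le (μ := μ) (η := fun _ => c) h1l h1u (fun _ => le_rfl)
      (fun _ => le_rfl)
    rwa [outerExp_const] at this
  have h2 : outerExp μ ξ ≤ outerExp μ (fun ω => ξ ω + c) + (-c) := by
    have := outerExp_add_le (μ := μ) (ξ := fun ω => ξ ω + c) (η := fun _ => -c)
      (c₁ := c₁ + c) (C₁ := C₁ + c)
      (fun ω => by show c₁ + c ≤ ξ ω + c; linarith [h1l ω])
      (fun ω => by show ξ ω + c ≤ C₁ + c; linarith [h1u ω])
      (fun _ => le_rfl) (fun _ => le_rfl)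
    rw [outerExp_const] at this
    have he : (fun ω => ξ ω + c + -c) = ξ := by funext ω; ring
    rwa [he] at this
  linarith

lemma outerExp_const_mul_le {ξ : Ω → ℝ} {a c C : ℝ} (ha : 0 < a)
    (hl : ∀ ω, c ≤ ξ ω) (hu : ∀ ω, ξ ω ≤ C) :
    outerExp μ (fun ω => a * ξ ω) ≤ a * outerExp μ ξ := by
  have key : ∀ b ∈ oE μ ξ, outerExp μ (fun ω => a * ξ ω) ≤ a * b := by
    rintro b ⟨ζ, hm, hi, hae, rfl⟩
    have h := outerExp_le_integral (ξ := fun ω => a * ξ ω) (c := a * c)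
      (fun ω => by show a * c ≤ a * ξ ω; nlinarith [hl ω]) (hm.const_mul a)
      (hi.const_mul a)
      (hae.mono fun ω hw => by show a * ξ ω ≤ a * ζ ω; nlinarith)
    rwa [integral_const_mul] at h
  have h2 : outerExp μ (fun ω => a * ξ ω) / a ≤ outerExp μ ξ := by
    refine le_csInf (oE_nonempty hu) fun b hb => ?_
    have := key b hb
    rw [div_le_iff₀ ha]
    linarith [this, mul_comm a b]
  calc outerExp μ (fun ω => a * ξ ω) = a * (outerExp μ (fun ω => a * ξ ω) / a) := by
        field_simp
    _ ≤ a * outerExp μ ξ := by nlinarith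

lemma neg_outerExp_neg_le {ξ : Ω → ℝ} {C : ℝ} (hb : ∀ ω, |ξ ω| ≤ C) :
    -outerExp μ (fun ω => -ξ ω) ≤ outerExp μ ξ := by
  have h := outerExp_add_le (μ := μ) (ξ := ξ) (η := fun ω => -ξ ω) (c₁ := -C) (C₁ := C)
    (c₂ := -C) (C₂ := C)
    (fun ω => (abs_le.1 (hb ω)).1) (fun ω => (abs_le.1 (hb ω)).2)
    (fun ω => by show -C ≤ -ξ ω; have := (abs_le.1 (hb ω)).2; linarith)
    (fun ω => by show -ξ ω ≤ C; have := (abs_le.1 (hb ω)).1; linarith)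
  have he : (fun ω => ξ ω + -ξ ω) = fun _ => (0:ℝ) := by funext ω; ring
  rw [he, outerExp_const] at h
  linarith

lemma outerExp_sum_le {ι : Type*} (s : Finset ι) (ξ : ι → Ω → ℝ)
    (h0 : ∀ i, ∀ ω, 0 ≤ ξ i ω) (h1 : ∀ i, ∀ ω, ξ i ω ≤ 1) :
    outerExp μ (fun ω => ∑ i ∈ s, ξ i ω) ≤ ∑ i ∈ s, outerExp μ (ξ i) := by
  classical
  induction s using Finset.induction with
  | empty => simp [outerExp_const]
  | @insert a s ha ih =>
    have he : (fun ω => ∑ i ∈ insert a s, ξ i ω)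
        = fun ω => ξ a ω + ∑ i ∈ s, ξ i ω := by
      funext ω; rw [Finset.sum_insert ha]
    rw [he, Finset.sum_insert ha]
    have hsum0 : ∀ ω, (0:ℝ) ≤ ∑ i ∈ s, ξ i ω :=
      fun ω => Finset.sum_nonneg fun i _ => h0 i ω
    have hsum1 : ∀ ω, (∑ i ∈ s, ξ i ω) ≤ (s.card : ℝ) := by
      intro ω
      calc (∑ i ∈ s, ξ i ω) ≤ ∑ _i ∈ s, (1:ℝ) :=
            Finset.sum_le_sum fun i _ => h1 i ω
        _ = (s.card : ℝ) := by simp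
    have := outerExp_add_le (μ := μ) (ξ := ξ a) (η := fun ω => ∑ i ∈ s, ξ i ω)
      (c₁ := 0) (C₁ := 1) (c₂ := 0) (C₂ := (s.card : ℝ))
      (h0 a) (h1 a) hsum0 hsum1
    exact this.trans (by linarith [ih])

lemma indicator_le_one {α : Type*} (s : Set α) (x : α) :
    s.indicator (fun _ => (1:ℝ)) x ≤ 1 := by
  by_cases h : x ∈ s <;> simp [Set.indicator_apply, h]

lemma indicator_nonneg' {α : Type*} (s : Set α) (x : α) :
    0 ≤ s.indicator (fun _ => (1:ℝ)) x := by
  by_cases h : x ∈ s <;> simp [Set.indicator_apply, h]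

lemma portmanteau_closed {S : Type*} [MetricSpace S] [MeasurableSpace S] [BorelSpace S]
    {X : ℕ → Ω → S} {Y : Ω → S} (hY : Measurable Y)
    (hXY : TendstoInDistHJ μ X Y) {K : Set S} (hK : IsClosed K) {δ : ℝ} (hδ : 0 < δ) :
    ∀ᶠ n in atTop, outerExp μ (fun ω => K.indicator (fun _ => (1:ℝ)) (X n ω))
      < (μ (Y ⁻¹' K)).toReal + δ := by
  rcases K.eq_empty_or_nonempty with rfl | hKne
  · refine Filter.Eventually.of_forall fun n => ?_
    have h0 : (fun ω => (∅ : Set S).indicator (fun _ => (1:ℝ)) (X n ω)) = fun _ => (0:ℝ) := by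
      funext ω; simp
    rw [h0, outerExp_const]
    positivity
  · set L : ℝ := (μ (Y ⁻¹' K)).toReal with hL
    set h : ℕ → S → ℝ := fun j x => max 0 (1 - j * Metric.infDist x K) with hh
    have hcont : ∀ j, Continuous (h j) :=
      fun j => continuous_const.max (continuous_const.sub
        (continuous_const.mul (Metric.continuous_infDist_pt K)))
    have hb : ∀ j x, |h j x| ≤ 1 := by
      intro j x
      rw [abs_le]
      constructor
      · have : (0:ℝ) ≤ h j x := le_max_left _ _
        linarith
      · refine max_le (by norm_num) ?_
        have h1 : 0 ≤ (j : ℝ) * Metric.infDist x K :=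
          mul_nonneg (Nat.cast_nonneg j) Metric.infDist_nonneg
        linarith
    have hind : ∀ j x, K.indicator (fun _ => (1:ℝ)) x ≤ h j x := by
      intro j x
      by_cases hx : x ∈ K
      · rw [Set.indicator_of_mem hx]
        have : Metric.infDist x K = 0 := Metric.infDist_zero_of_mem hx
        simp [hh, this]
      · rw [Set.indicator_of_notMem hx]
        exact le_max_left _ _
    have hLint : L = ∫ ω, (Y ⁻¹' K).indicator (fun _ => (1:ℝ)) ω ∂μ := by
      rw [hL]
      have : ∫ ω, (Y ⁻¹' K).indicator (fun _ => (1:ℝ)) ω ∂μ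
          = ∫ ω, (Y ⁻¹' K).indicator (1 : Ω → ℝ) ω ∂μ := rfl
      rw [this, integral_indicator_one (hY hK.measurableSet)]; rfl
    have htend : Tendsto (fun j => ∫ ω, h j (Y ω) ∂μ) atTop (nhds L) := by
      rw [hLint]
      refine tendsto_integral_of_dominated_convergence (fun _ => (1:ℝ))
        (fun j => ((hcont j).measurable.comp hY).aestronglyMeasurable)
        (integrable_const 1) (fun j => Filter.Eventually.of_forall fun ω => ?_)
        (Filter.Eventually.of_forall fun ω => ?_)
      · rw [Real.norm_eq_abs]; exact hb j (Y ω)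
      · by_cases hx : Y ω ∈ K
        · have hz : Metric.infDist (Y ω) K = 0 := Metric.infDist_zero_of_mem hx
          have he : ∀ j : ℕ, h j (Y ω) = 1 := by intro j; simp [hh, hz]
          have hi : (Y ⁻¹' K).indicator (fun _ => (1:ℝ)) ω = 1 :=
            Set.indicator_of_mem (by exact hx) _
          rw [hi]
          simp only [he]
          exact tendsto_const_nhds
        · have hpos : 0 < Metric.infDist (Y ω) K :=
            (hK.notMem_iff_infDist_pos hKne).1 hx
          have hi : (Y ⁻¹' K).indicator (fun _ => (1:ℝ)) ω = 0 :=
            Set.indicator_of_notMem (by exact hx) _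
          rw [hi]
          obtain ⟨J, hJ⟩ := exists_nat_gt (1 / Metric.infDist (Y ω) K)
          have hev : ∀ j ≥ J, h j (Y ω) = 0 := by
            intro j hj
            have hj' : (1:ℝ) / Metric.infDist (Y ω) K < j :=
              lt_of_lt_of_le hJ (by exact_mod_cast hj)
            have : (1:ℝ) < j * Metric.infDist (Y ω) K := by
              rw [div_lt_iff₀ hpos] at hj'
              linarith
            simp [hh, max_eq_left]
            linarith
          refine tendsto_const_nhds.congr' ?_
          filter_upwards [Filter.eventually_ge_atTop J] with j hj
          exact (hev j hj).symm
    obtain ⟨j₀, hj₀⟩ := (htend.eventually_lt_const (by linarith : L < L + δ/2)).exists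
    have hXj := hXY (h j₀) (hcont j₀) ⟨1, hb j₀⟩
    have hev2 : ∀ᶠ n in atTop,
        outerExp μ (fun ω => h j₀ (X n ω)) < L + δ :=
      hXj.eventually_lt_const (by linarith)
    filter_upwards [hev2] with n hn
    have hmono : outerExp μ (fun ω => K.indicator (fun _ => (1:ℝ)) (X n ω))
        ≤ outerExp μ (fun ω => h j₀ (X n ω)) :=
      outerExp_mono (c := 0) (C := 1) (fun ω => indicator_nonneg' _ _)
        (fun ω => (abs_le.1 (hb j₀ (X n ω))).2) (fun ω => hind j₀ (X n ω))
    linarith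

lemma key_mem {S S' : Type*} [MetricSpace S] [MetricSpace S']
    {S₀ : Set S} {fn : ℕ → S → S'} {f : S → S'}
    (hconv : ∀ (u : ℕ → S) (x : S), x ∈ S₀ → Tendsto u atTop (nhds x) →
      Tendsto (fun n => fn n (u n)) atTop (nhds (f x)))
    {F : Set S'} (hF : IsClosed F)
    {x : S} (hx : x ∈ S₀)
    (hcl : ∀ k : ℕ, x ∈ closure {z | ∃ y, dist z y < 1/((k:ℝ)+1) ∧ ∃ m, k ≤ m ∧ fn m y ∈ F}) :
    f x ∈ F := by
  classical
  have hstar : ∀ k : ℕ, ∃ p : ℕ × S, k ≤ p.1 ∧ dist x p.2 < 2/((k:ℝ)+1) ∧ fn p.1 p.2 ∈ F := by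
    intro k
    obtain ⟨x', hx'E, hd⟩ := Metric.mem_closure_iff.1 (hcl k) (1/((k:ℝ)+1)) (by positivity)
    obtain ⟨y, hyd, m, hm, hmF⟩ := hx'E
    refine ⟨(m, y), hm, ?_, hmF⟩
    have ht := dist_triangle x x' y
    have h2 : (1:ℝ)/((k:ℝ)+1) + 1/((k:ℝ)+1) = 2/((k:ℝ)+1) := by ring
    simp only
    linarith
  let φ : ℕ → ℕ × S := fun j => Nat.rec (hstar 0).choose
    (fun j ih => (hstar (max (ih.1 + 1) (j+1))).choose) j
  have hφs : ∀ j, φ (j+1) = (hstar (max ((φ j).1 + 1) (j+1))).choose := fun j => rfl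
  have hmono : ∀ j, (φ j).1 < (φ (j+1)).1 := by
    intro j
    have hs := (hstar (max ((φ j).1 + 1) (j+1))).choose_spec.1
    rw [hφs j]
    calc (φ j).1 < (φ j).1 + 1 := Nat.lt_succ_self _
      _ ≤ max ((φ j).1 + 1) (j+1) := le_max_left _ _
      _ ≤ _ := hs
  have hsm : StrictMono (fun j => (φ j).1) := strictMono_nat_of_lt_succ hmono
  have hdist : ∀ j, dist x (φ j).2 < 2/((j:ℝ)+1) := by
    intro j
    cases j with
    | zero => exact (hstar 0).choose_spec.2.1
    | succ j =>
      have hs := (hstar (max ((φ j).1 + 1) (j+1))).choose_spec.2.1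
      rw [hφs j]
      refine lt_of_lt_of_le hs ?_
      have hge : ((j:ℝ)+1) + 1 ≤ ((max ((φ j).1 + 1) (j+1) : ℕ) : ℝ) + 1 := by
        have h1 : (j+1 : ℕ) ≤ max ((φ j).1 + 1) (j+1) := le_max_right _ _
        have h2 := (Nat.cast_le (α := ℝ)).2 h1
        push_cast at h2 ⊢
        linarith
      have h1 : (0:ℝ) < (j:ℝ) + 1 + 1 := by positivity
      calc 2/(((max ((φ j).1 + 1) (j+1) : ℕ) : ℝ) + 1)
          ≤ 2/(((j:ℝ)+1)+1) := div_le_div_of_nonneg_left (by norm_num) h1 hge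
        _ ≤ 2/((((j:ℕ)+1:ℕ):ℝ)+1) := by push_cast; ring_nf; exact le_rfl
  have hmem : ∀ j, fn (φ j).1 (φ j).2 ∈ F := by
    intro j
    cases j with
    | zero => exact (hstar 0).choose_spec.2.2
    | succ j =>
      rw [hφs j]
      exact (hstar (max ((φ j).1 + 1) (j+1))).choose_spec.2.2
  let u : ℕ → S := fun n => if hn : ∃ j, (φ j).1 = n then (φ hn.choose).2 else x
  have hu : ∀ j, u ((φ j).1) = (φ j).2 := by
    intro j
    have hn : ∃ j', (φ j').1 = (φ j).1 := ⟨j, rfl⟩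
    have hj : hn.choose = j := hsm.injective hn.choose_spec
    show (if hn' : ∃ j', (φ j').1 = (φ j).1 then (φ hn'.choose).2 else x) = (φ j).2
    rw [dif_pos hn]
    exact congrArg (fun i => (φ i).2) hj
  have htendu : Tendsto u atTop (nhds x) := by
    rw [Metric.tendsto_atTop]
    intro ε hε
    obtain ⟨J, hJ⟩ := exists_nat_gt (2/ε)
    refine ⟨(φ J).1, fun n hn => ?_⟩
    by_cases hex : ∃ j, (φ j).1 = n
    · have hj : (φ hex.choose).1 = n := hex.choose_spec
      have hJle : J ≤ hex.choose := by
        have : (φ J).1 ≤ (φ hex.choose).1 := by rw [hj]; exact hn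
        exact hsm.le_iff_le.1 this
      have hun : u n = (φ hex.choose).2 := by
        show (if hn' : ∃ j, (φ j).1 = n then (φ hn'.choose).2 else x) = _
        rw [dif_pos hex]
      rw [hun, dist_comm]
      have h1 := hdist hex.choose
      have h2 : 2/((hex.choose : ℝ)+1) ≤ 2/((J:ℝ)+1) := by
        refine div_le_div_of_nonneg_left (by norm_num) (by positivity) ?_
        have := (Nat.cast_le (α := ℝ)).2 hJle
        linarith
      have h3 : 2/((J:ℝ)+1) < ε := by
        rw [div_lt_iff₀ (by positivity)]
        have h4 : 2 < ε * J := by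
          rw [div_lt_iff₀ hε] at hJ
          linarith [hJ]
        nlinarith
      linarith
    · have hun : u n = x := by
        show (if hn' : ∃ j, (φ j).1 = n then (φ hn'.choose).2 else x) = x
        rw [dif_neg hex]
      rw [hun, dist_self]
      exact hε
  have htend := (hconv u x hx htendu).comp hsm.tendsto_atTop
  have htend' : Tendsto (fun j => fn (φ j).1 (φ j).2) atTop (nhds (f x)) := by
    refine htend.congr fun j => ?_
    show fn (φ j).1 (u ((φ j).1)) = fn (φ j).1 (φ j).2
    rw [hu j]
  exact hF.mem_of_tendsto htend' (Filter.Eventually.of_forall hmem)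

lemma composite_closed {S S' : Type*} [MetricSpace S] [MeasurableSpace S] [BorelSpace S]
    [MetricSpace S'] {S₀ : Set S} {fn : ℕ → S → S'} {f : S → S'}
    (hconv : ∀ (u : ℕ → S) (x : S), x ∈ S₀ → Tendsto u atTop (nhds x) →
      Tendsto (fun n => fn n (u n)) atTop (nhds (f x)))
    {X : ℕ → Ω → S} {Y : Ω → S} (hY : Measurable Y)
    (hrange : ∀ ω, Y ω ∈ S₀) (hXY : TendstoInDistHJ μ X Y)
    {F : Set S'} (hF : IsClosed F) {δ : ℝ} (hδ : 0 < δ) :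
    ∀ᶠ n in atTop, outerExp μ (fun ω => F.indicator (fun _ => (1:ℝ)) (fn n (X n ω)))
      < (μ ((fun ω => f (Y ω)) ⁻¹' F)).toReal + δ := by
  classical
  set E : ℕ → Set S :=
    fun k => {z | ∃ y, dist z y < 1/((k:ℝ)+1) ∧ ∃ m, k ≤ m ∧ fn m y ∈ F} with hE
  have hEanti : Antitone E := by
    refine antitone_nat_of_succ_le fun k => ?_
    rintro z ⟨y, hd, m, hm, hmF⟩
    refine ⟨y, lt_of_lt_of_le hd ?_, m, le_trans (Nat.le_succ k) hm, hmF⟩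
    refine div_le_div_of_nonneg_left (by norm_num) (by positivity) ?_
    push_cast
    linarith
  have hanti : Antitone fun k => Y ⁻¹' closure (E k) :=
    fun k l hkl => Set.preimage_mono (closure_mono (hEanti hkl))
  have htm : Tendsto (fun k => μ (Y ⁻¹' closure (E k))) atTop
      (nhds (μ (⋂ k, Y ⁻¹' closure (E k)))) :=
    tendsto_measure_iInter_atTop
      (fun k => (hY isClosed_closure.measurableSet).nullMeasurableSet) hanti
      ⟨0, measure_ne_top μ _⟩
  have htr : Tendsto (fun k => (μ (Y ⁻¹' closure (E k))).toReal) atTop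
      (nhds ((μ (⋂ k, Y ⁻¹' closure (E k))).toReal)) :=
    (ENNReal.tendsto_toReal (measure_ne_top μ _)).comp htm
  have hsub : (⋂ k, Y ⁻¹' closure (E k)) ⊆ (fun ω => f (Y ω)) ⁻¹' F := by
    intro ω hω
    have h1 : ∀ k, Y ω ∈ closure (E k) := fun k => Set.mem_iInter.1 hω k
    exact key_mem hconv hF (hrange ω) h1
  have hbound : (μ (⋂ k, Y ⁻¹' closure (E k))).toReal
      ≤ (μ ((fun ω => f (Y ω)) ⁻¹' F)).toReal :=
    ENNReal.toReal_mono (measure_ne_top μ _) (measure_mono hsub)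
  obtain ⟨k, hk⟩ := (htr.eventually_lt_const
    (lt_of_le_of_lt hbound (by linarith :
      (μ ((fun ω => f (Y ω)) ⁻¹' F)).toReal
        < (μ ((fun ω => f (Y ω)) ⁻¹' F)).toReal + δ/2))).exists
  have hA := portmanteau_closed hY hXY (isClosed_closure (s := E k)) (half_pos hδ)
  filter_upwards [hA, Filter.eventually_ge_atTop k] with n h1 h2
  have hmono : outerExp μ (fun ω => F.indicator (fun _ => (1:ℝ)) (fn n (X n ω)))
      ≤ outerExp μ (fun ω => (closure (E k)).indicator (fun _ => (1:ℝ)) (X n ω)) := by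
    refine outerExp_mono (c := 0) (C := 1) (fun ω => indicator_nonneg' _ _)
      (fun ω => indicator_le_one _ _) (fun ω => ?_)
    by_cases hfn : fn n (X n ω) ∈ F
    · have hXE : X n ω ∈ E k := ⟨X n ω, by simp; positivity, n, h2, hfn⟩
      rw [Set.indicator_of_mem hfn, Set.indicator_of_mem (subset_closure hXE)]
    · rw [Set.indicator_of_notMem hfn]
      exact indicator_nonneg' _ _
  linarith

lemma count_iff {M t : ℝ} {N i : ℕ} (hM : 0 < M) (hN : (0:ℝ) < N) (ht0 : 0 ≤ t) :
    ((i:ℝ) * (M/N) ≤ t ↔ i ≤ Nat.floor (t * N / M)) := by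
  have hMN : 0 < M / N := by positivity
  have h1 : (i:ℝ) * (M/N) ≤ t ↔ (i:ℝ) ≤ t / (M/N) := (le_div_iff₀ hMN).symm
  rw [h1, div_div_eq_mul_div]
  exact (Nat.le_floor_iff (by positivity)).symm

lemma count_upper {M t : ℝ} {N : ℕ} (hM : 0 < M) (hN : 1 ≤ N) (ht0 : 0 ≤ t) (htM : t ≤ M) :
    t ≤ M/N + (M/N) * ((min (N-1) (Nat.floor (t * N / M)) : ℕ) : ℝ) := by
  have hNR : (0:ℝ) < N := by exact_mod_cast Nat.lt_of_lt_of_le Nat.zero_lt_one hN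
  have hMN : 0 < M / N := by positivity
  rcases le_or_gt (Nat.floor (t * N / M)) (N-1) with hc | hc
  · rw [min_eq_right hc]
    have hkey : t * N / M < Nat.floor (t * N / M) + 1 := Nat.lt_floor_add_one _
    have h2 := mul_lt_mul_of_pos_right hkey hMN
    have h3 : t * N / M * (M / N) = t := by field_simp
    rw [h3] at h2
    set q : ℝ := ((Nat.floor (t * N / M) : ℕ) : ℝ)
    nlinarith
  · rw [min_eq_left (le_of_lt hc)]
    have hcast : ((N - 1 : ℕ) : ℝ) = (N:ℝ) - 1 := by
      rw [Nat.cast_sub hN]; norm_num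
    rw [hcast]
    have h4 : M/N + M/N * ((N:ℝ) - 1) = M := by field_simp; ring
    linarith

lemma count_lower {M t : ℝ} {N : ℕ} (hM : 0 < M) (hN : 1 ≤ N) (ht0 : 0 ≤ t) :
    (M/N) * ((min (N-1) (Nat.floor (t * N / M)) : ℕ) : ℝ) ≤ t := by
  have hNR : (0:ℝ) < N := by exact_mod_cast Nat.lt_of_lt_of_le Nat.zero_lt_one hN
  have hMN : 0 < M / N := by positivity
  have h1 : ((min (N-1) (Nat.floor (t * N / M)) : ℕ) : ℝ) ≤ ((Nat.floor (t * N / M) : ℕ) : ℝ) := by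
    exact_mod_cast min_le_right _ _
  have h2 : ((Nat.floor (t * N / M) : ℕ) : ℝ) ≤ t * N / M := Nat.floor_le (by positivity)
  have h3 : (M/N) * (t * N / M) = t := by field_simp
  nlinarith

lemma main_half {S S' : Type*} [MetricSpace S] [MeasurableSpace S] [BorelSpace S]
    [MetricSpace S'] [MeasurableSpace S'] [BorelSpace S']
    {S₀ : Set S} {fn : ℕ → S → S'} {f : S → S'} (hf : Measurable f)
    (hconv : ∀ (u : ℕ → S) (x : S), x ∈ S₀ → Tendsto u atTop (nhds x) →
      Tendsto (fun n => fn n (u n)) atTop (nhds (f x)))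
    {X : ℕ → Ω → S} {Y : Ω → S} (hY : Measurable Y)
    (hrange : ∀ ω, Y ω ∈ S₀) (hXY : TendstoInDistHJ μ X Y)
    (g : S' → ℝ) (hg : Continuous g) (C : ℝ) (hgb : ∀ z, |g z| ≤ C)
    {ε : ℝ} (hε : 0 < ε) :
    ∀ᶠ n in atTop,
      outerExp μ (fun ω => g (fn n (X n ω))) < (∫ ω, g (f (Y ω)) ∂μ) + ε := by
  classical
  set C' : ℝ := max C 0 + 1 with hC'
  have hC'pos : 0 < C' := by
    have := le_max_right C 0
    rw [hC']; linarith
  have hgb' : ∀ z, |g z| ≤ C' := fun z =>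
    (hgb z).trans ((le_max_left C 0).trans (by rw [hC']; linarith))
  set M : ℝ := 2 * C' with hM
  have hMpos : 0 < M := by rw [hM]; linarith
  set G : S' → ℝ := fun z => g z + C' with hG
  have hG0 : ∀ z, 0 ≤ G z := fun z => by
    have := (abs_le.1 (hgb' z)).1
    show 0 ≤ g z + C'
    linarith
  have hGM : ∀ z, G z ≤ M := fun z => by
    have := (abs_le.1 (hgb' z)).2
    show g z + C' ≤ M
    rw [hM]; linarith
  have hGcont : Continuous G := hg.add continuous_const
  obtain ⟨N, hNgt⟩ := exists_nat_gt (M / (ε/4))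
  have hNR : (0:ℝ) < N := lt_trans (by positivity) hNgt
  have hN1 : 1 ≤ N := by
    have : 0 < N := by exact_mod_cast hNR
    omega
  have hMN : M / N < ε/4 := by
    rw [div_lt_iff₀ hNR]
    rw [div_lt_iff₀ (by positivity : (0:ℝ) < ε/4)] at hNgt
    linarith
  have hMNpos : 0 < M / N := by positivity
  set s : Finset ℕ := Finset.Icc 1 (N-1) with hs
  set Fi : ℕ → Set S' := fun i => {z | (i:ℝ) * (M/N) ≤ G z} with hFi
  have hFic : ∀ i, IsClosed (Fi i) := fun i => isClosed_le continuous_const hGcont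
  have hsum_eq : ∀ z : S', ∑ i ∈ s, (Fi i).indicator (fun _ => (1:ℝ)) z
      = ((min (N-1) (Nat.floor (G z * N / M)) : ℕ) : ℝ) := by
    intro z
    have h1 : ∀ i, (Fi i).indicator (fun _ => (1:ℝ)) z
        = if (i:ℝ) * (M/N) ≤ G z then (1:ℝ) else 0 := by
      intro i
      by_cases hi : (i:ℝ) * (M/N) ≤ G z
      · rw [if_pos hi, Set.indicator_of_mem (by exact hi)]
      · rw [if_neg hi, Set.indicator_of_notMem (by exact hi)]
    simp only [h1]
    rw [Finset.sum_boole]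
    have h3 : Finset.filter (fun x : ℕ => (x:ℝ) * (M / (N:ℝ)) ≤ G z) s
        = Finset.Icc 1 (min (N-1) (Nat.floor (G z * (N:ℝ) / M))) := by
      ext i
      rw [Finset.mem_filter, hs, Finset.mem_Icc, Finset.mem_Icc,
        count_iff hMpos hNR (hG0 z)]
      omega
    rw [h3, Nat.card_Icc]
    have h4 : min (N-1) (Nat.floor (G z * (N:ℝ) / M)) + 1 - 1
        = min (N-1) (Nat.floor (G z * (N:ℝ) / M)) := by omega
    rw [h4]
  have hcount_up : ∀ z, G z ≤ M/N + (M/N) * ∑ i ∈ s, (Fi i).indicator (fun _ => (1:ℝ)) z := by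
    intro z
    rw [hsum_eq z]
    exact count_upper hMpos hN1 (hG0 z) (hGM z)
  have hcount_lo : ∀ z, (M/N) * ∑ i ∈ s, (Fi i).indicator (fun _ => (1:ℝ)) z ≤ G z := by
    intro z
    rw [hsum_eq z]
    exact count_lower hMpos hN1 (hG0 z)
  set T : ℕ → ℝ := fun i => (μ ((fun ω => f (Y ω)) ⁻¹' Fi i)).toReal with hT
  set δ' : ℝ := ε / (4 * (M + 1)) with hδ'
  have hδ'pos : 0 < δ' := by
    rw [hδ']
    apply div_pos hε
    nlinarith [hMpos]
  have hrw : ∀ i, (fun ω => (Fi i).indicator (fun _ => (1:ℝ)) (f (Y ω)))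
      = ((fun ω => f (Y ω)) ⁻¹' (Fi i)).indicator (fun _ => (1:ℝ)) := by
    intro i
    funext ω
    by_cases hw : f (Y ω) ∈ Fi i
    · rw [Set.indicator_of_mem hw, Set.indicator_of_mem (by exact hw)]
    · rw [Set.indicator_of_notMem hw, Set.indicator_of_notMem (by exact hw)]
  have hmeasFi : ∀ i, MeasurableSet ((fun ω => f (Y ω)) ⁻¹' (Fi i)) :=
    fun i => (hf.comp hY) (hFic i).measurableSet
  have hint : ∀ i, T i = ∫ ω, (Fi i).indicator (fun _ => (1:ℝ)) (f (Y ω)) ∂μ := by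
    intro i
    rw [hrw i]
    have : ((fun ω => f (Y ω)) ⁻¹' (Fi i)).indicator (fun _ : Ω => (1:ℝ))
        = ((fun ω => f (Y ω)) ⁻¹' (Fi i)).indicator (1 : Ω → ℝ) := rfl
    rw [this, integral_indicator_one (hmeasFi i)]; rfl
  have hindint : ∀ i, Integrable (fun ω => (Fi i).indicator (fun _ => (1:ℝ)) (f (Y ω))) μ := by
    intro i
    rw [hrw i]
    exact (integrable_const (1:ℝ)).indicator (hmeasFi i)
  have hGint : Integrable (fun ω => G (f (Y ω))) μ := by
    refine Integrable.mono' (integrable_const M)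
      ((hGcont.measurable.comp (hf.comp hY)).aestronglyMeasurable)
      (Filter.Eventually.of_forall fun ω => ?_)
    rw [Real.norm_eq_abs, abs_le]
    exact ⟨by linarith [hG0 (f (Y ω))], hGM _⟩
  have hgint : Integrable (fun ω => g (f (Y ω))) μ := by
    refine Integrable.mono' (integrable_const C')
      ((hg.measurable.comp (hf.comp hY)).aestronglyMeasurable)
      (Filter.Eventually.of_forall fun ω => ?_)
    rw [Real.norm_eq_abs]
    exact hgb' _
  have hTsum : (M/N) * ∑ i ∈ s, T i ≤ ∫ ω, G (f (Y ω)) ∂μ := by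
    have h1 : ∑ i ∈ s, T i
        = ∫ ω, ∑ i ∈ s, (Fi i).indicator (fun _ => (1:ℝ)) (f (Y ω)) ∂μ := by
      rw [integral_finset_sum s (fun i _ => hindint i)]
      exact Finset.sum_congr rfl fun i _ => hint i
    rw [h1, ← integral_const_mul]
    exact integral_mono ((integrable_finset_sum s (fun i _ => hindint i)).const_mul _)
      hGint (fun ω => hcount_lo (f (Y ω)))
  have hBall : ∀ᶠ n in atTop, ∀ i ∈ s,
      outerExp μ (fun ω => (Fi i).indicator (fun _ => (1:ℝ)) (fn n (X n ω))) < T i + δ' := by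
    rw [Filter.eventually_all_finset]
    intro i _
    exact composite_closed hconv hY hrange hXY (hFic i) hδ'pos
  have hscard : ((s.card : ℕ) : ℝ) ≤ N := by
    rw [hs, Nat.card_Icc]
    have : (N - 1 + 1 - 1 : ℕ) ≤ N := by omega
    exact_mod_cast this
  filter_upwards [hBall] with n hn
  set ξ : Ω → ℝ := fun ω => ∑ i ∈ s, (Fi i).indicator (fun _ => (1:ℝ)) (fn n (X n ω)) with hξ
  have hξ0 : ∀ ω, 0 ≤ ξ ω := fun ω => Finset.sum_nonneg fun i _ => indicator_nonneg' _ _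
  have hξN : ∀ ω, ξ ω ≤ (N:ℝ) := by
    intro ω
    have h1 : ξ ω ≤ (s.card : ℝ) := by
      rw [hξ]
      calc (∑ i ∈ s, (Fi i).indicator (fun _ => (1:ℝ)) (fn n (X n ω)))
          ≤ ∑ _i ∈ s, (1:ℝ) := Finset.sum_le_sum fun i _ => indicator_le_one _ _
        _ = (s.card : ℝ) := by simp
    linarith [hscard]
  have hMoverN_N : (M/N) * (N:ℝ) = M := by field_simp
  have step1 : outerExp μ (fun ω => G (fn n (X n ω)))
      ≤ outerExp μ (fun ω => (M/N) * ξ ω + M/N) := by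
    refine outerExp_mono (c := 0) (C := M + M/N) (fun ω => hG0 _) (fun ω => ?_) (fun ω => ?_)
    · show (M/N) * ξ ω + M/N ≤ M + M/N
      have := hξN ω
      nlinarith
    · show G (fn n (X n ω)) ≤ (M/N) * ξ ω + M/N
      have := hcount_up (fn n (X n ω))
      rw [hξ]
      linarith
  have step2 : outerExp μ (fun ω => (M/N) * ξ ω + M/N)
      = outerExp μ (fun ω => (M/N) * ξ ω) + M/N := by
    refine outerExp_add_const (M/N) (c₁ := 0) (C₁ := M) (fun ω => ?_) (fun ω => ?_)
    · exact mul_nonneg (le_of_lt hMNpos) (hξ0 ω)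
    · show (M/(N:ℝ)) * ξ ω ≤ M
      have h1 := hξN ω
      nlinarith [hMNpos, hMoverN_N]
  have step3 : outerExp μ (fun ω => (M/N) * ξ ω) ≤ (M/N) * outerExp μ ξ :=
    outerExp_const_mul_le hMNpos (c := 0) (C := (N:ℝ)) hξ0 hξN
  have step4 : outerExp μ ξ
      ≤ ∑ i ∈ s, outerExp μ (fun ω => (Fi i).indicator (fun _ => (1:ℝ)) (fn n (X n ω))) :=
    outerExp_sum_le s _ (fun i ω => indicator_nonneg' _ _) (fun i ω => indicator_le_one _ _)
  have step5 : ∑ i ∈ s, outerExp μ (fun ω => (Fi i).indicator (fun _ => (1:ℝ)) (fn n (X n ω)))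
      ≤ (∑ i ∈ s, T i) + (s.card : ℝ) * δ' := by
    have h1 : ∑ i ∈ s, outerExp μ (fun ω => (Fi i).indicator (fun _ => (1:ℝ)) (fn n (X n ω)))
        ≤ ∑ i ∈ s, (T i + δ') := Finset.sum_le_sum fun i hi => le_of_lt (hn i hi)
    rw [Finset.sum_add_distrib] at h1
    simpa using h1
  have houtG : outerExp μ (fun ω => G (fn n (X n ω)))
      ≤ ∫ ω, G (f (Y ω)) ∂μ + M * δ' + M/N := by
    have hcard : (s.card : ℝ) * δ' ≤ (N:ℝ) * δ' :=
      mul_le_mul_of_nonneg_right hscard (le_of_lt hδ'pos)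
    have h6 : (M/N) * ((N:ℝ) * δ') = M * δ' := by field_simp
    have h7 : (M/N) * outerExp μ ξ ≤ (M/N) * ((∑ i ∈ s, T i) + (N:ℝ) * δ') := by
      refine mul_le_mul_of_nonneg_left ?_ (le_of_lt hMNpos)
      linarith [step4, step5]
    have h8 : (M/N) * ((∑ i ∈ s, T i) + (N:ℝ) * δ')
        = (M/N) * (∑ i ∈ s, T i) + M * δ' := by
      rw [mul_add, h6]
    linarith [step1, step2, step3, hTsum, h7, h8]
  have hMδ' : M * δ' < ε/4 := by
    have h1 : (0:ℝ) < M + 1 := by linarith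
    have h2 : M * (ε / (4 * (M + 1))) = M / (M+1) * (ε/4) := by field_simp
    have h3 : M / (M+1) < 1 := (div_lt_one h1).2 (by linarith)
    have h4 : (0:ℝ) < ε/4 := by linarith
    rw [hδ', h2]
    have h5 := mul_lt_mul_of_pos_right h3 h4
    rw [one_mul] at h5
    exact h5
  have houtg : outerExp μ (fun ω => G (fn n (X n ω)))
      = outerExp μ (fun ω => g (fn n (X n ω))) + C' := by
    have he : (fun ω => G (fn n (X n ω))) = fun ω => g (fn n (X n ω)) + C' := rfl
    rw [he]
    exact outerExp_add_const C' (c₁ := -C') (C₁ := C')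
      (fun ω => (abs_le.1 (hgb' _)).1) (fun ω => (abs_le.1 (hgb' _)).2)
  have hintg : ∫ ω, G (f (Y ω)) ∂μ = (∫ ω, g (f (Y ω)) ∂μ) + C' := by
    have he : (fun ω => G (f (Y ω))) = fun ω => g (f (Y ω)) + C' := rfl
    rw [he, integral_add hgint (integrable_const C'), integral_const]
    simp
  rw [houtg, hintg] at houtG
  linarith

end ECMAux

/-- The extended continuous mapping theorem (Theorem D.2). -/
theorem extended_continuous_mapping
    {Ω S S' : Type*} [MeasurableSpace Ω]
    [MetricSpace S] [MeasurableSpace S] [BorelSpace S]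
    [MetricSpace S'] [MeasurableSpace S'] [BorelSpace S']
    (μ : Measure Ω) [IsProbabilityMeasure μ]
    (S₀ : Set S) (hS₀ : MeasurableSet S₀)
    (fn : ℕ → S → S') (f : S → S') (hf : Measurable f)
    (hconv : ∀ (u : ℕ → S) (x : S), x ∈ S₀ → Tendsto u atTop (nhds x) →
      Tendsto (fun n => fn n (u n)) atTop (nhds (f x)))
    (X : ℕ → Ω → S) (Y : Ω → S) (hY : Measurable Y)
    (hrange : ∀ ω, Y ω ∈ S₀)
    (hXY : TendstoInDistHJ μ X Y) :
    TendstoInDistHJ μ (fun n ω => fn n (X n ω)) (fun ω => f (Y ω)) := by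
  intro g hg hgbd
  obtain ⟨C, hC⟩ := hgbd
  rw [Metric.tendsto_atTop]
  intro ε hε
  have h1 := ECMAux.main_half hf hconv hY hrange hXY g hg C hC (half_pos hε)
  have h2 := ECMAux.main_half hf hconv hY hrange hXY (fun z => -g z) hg.neg C
    (fun z => by rw [abs_neg]; exact hC z) (half_pos hε)
  have hIneg : (∫ ω, -g (f (Y ω)) ∂μ) = -(∫ ω, g (f (Y ω)) ∂μ) := integral_neg _
  obtain ⟨n₀, hn₀⟩ := Filter.eventually_atTop.1 (h1.and h2)
  refine ⟨n₀, fun n hn => ?_⟩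
  obtain ⟨ha, hb⟩ := hn₀ n hn
  rw [hIneg] at hb
  have hlow : -outerExp μ (fun ω => -g (fn n (X n ω)))
      ≤ outerExp μ (fun ω => g (fn n (X n ω))) :=
    ECMAux.neg_outerExp_neg_le (C := C) (fun ω => hC _)
  rw [Real.dist_eq, abs_lt]
  constructor <;> [skip; skip]
  · linarith
  · linarith
end
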